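/- arXiv:2011.08613 — 2 statements merged into one kernel-verified Lean document; each statement's English description precedes it below -/
import Mathlib

section
/- Let Φ, Φ₁ be admissible functions, X a uniformly perfect metric space with more than one point, and F a non-empty totally bounded subset with 0 < dim_A F < ∞ and dim^Φ_upper F = 0. Let η ∈ (0, dim_A F). If there exist b, Δ > 0 such that Φ₁(δ^α) ≤ (Φ(δ))^b for all δ ∈ (0,Δ), where α = dim_A F/(dim_A F − η), then dim^{Φ₁}_upper F ≤ η. -/
open Metric Set Filter MeasureTheory Topology

/-- A metric space is `c`-uniformly perfect for some `c ∈ (0,1)`: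
for all `x` and `0 < R < diam X`, `B(x,R) \ B(x,cR) ≠ ∅`. -/
def UniformlyPerfect (X : Type*) [MetricSpace X] : Prop :=
  ∃ c : ℝ, 0 < c ∧ c < 1 ∧ ∀ (x : X) (R : ℝ), 0 < R →
    ENNReal.ofReal R < EMetric.diam (Set.univ : Set X) →
    ∃ y : X, dist x y < R ∧ c * R ≤ dist x y

/-- `Φ` is admissible: on some interval `(0,Y)` it satisfies `0 < Φ(δ) ≤ δ`,
`Φ(δ)/δ → 0` as `δ → 0⁺`, and `Φ` is monotonic on `(0,Y)`. -/
def Admissible (Φ : ℝ → ℝ) : Prop :=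
  ∃ Y : ℝ, 0 < Y ∧ (∀ δ ∈ Set.Ioo (0:ℝ) Y, 0 < Φ δ ∧ Φ δ ≤ δ) ∧
    Filter.Tendsto (fun δ => Φ δ / δ) (nhdsWithin 0 (Set.Ioi 0)) (nhds 0) ∧
    (MonotoneOn Φ (Set.Ioo 0 Y) ∨ AntitoneOn Φ (Set.Ioo 0 Y))

/-- There is a (finite) cover of `F` by sets of diameter in `[Φ(δ), δ]`
whose `s`-diameter sum is at most `ε`. -/
def CoverSum {X : Type*} [MetricSpace X] (Φ : ℝ → ℝ) (s ε δ : ℝ) (F : Set X) : Prop :=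
  ∃ (n : ℕ) (U : Fin n → Set X), F ⊆ ⋃ i, U i ∧
    (∀ i, Φ δ ≤ Metric.diam (U i) ∧ Metric.diam (U i) ≤ δ) ∧
    ∑ i, Metric.diam (U i) ^ s ≤ ε

/-- The upper `Φ`-intermediate dimension. -/
noncomputable def upperPhiDim {X : Type*} [MetricSpace X] (Φ : ℝ → ℝ) (F : Set X) : ℝ :=
  sInf {s : ℝ | 0 ≤ s ∧ ∀ ε : ℝ, 0 < ε → ∃ δ₀ ∈ Set.Ioc (0:ℝ) 1,
    ∀ δ ∈ Set.Ioo (0:ℝ) δ₀, CoverSum Φ s ε δ F}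

/-- The lower `Φ`-intermediate dimension. -/
noncomputable def lowerPhiDim {X : Type*} [MetricSpace X] (Φ : ℝ → ℝ) (F : Set X) : ℝ :=
  sInf {s : ℝ | 0 ≤ s ∧ ∀ ε : ℝ, 0 < ε → ∀ δ₀ ∈ Set.Ioc (0:ℝ) 1,
    ∃ δ ∈ Set.Ioo (0:ℝ) δ₀, CoverSum Φ s ε δ F}

/-- The smallest number of sets of diameter at most `δ` needed to cover `F`. -/
noncomputable def coverNum {X : Type*} [MetricSpace X] (F : Set X) (δ : ℝ) : ℕ :=
  sInf {n : ℕ | ∃ U : Fin n → Set X, F ⊆ ⋃ i, U i ∧ ∀ i, Metric.diam (U i) ≤ δ}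

/-- Upper box (Minkowski) dimension. -/
noncomputable def upperBoxDim {X : Type*} [MetricSpace X] (F : Set X) : ℝ :=
  Filter.limsup (fun δ : ℝ => Real.log (coverNum F δ) / -Real.log δ)
    (nhdsWithin 0 (Set.Ioi 0))

/-- Lower box (Minkowski) dimension. -/
noncomputable def lowerBoxDim {X : Type*} [MetricSpace X] (F : Set X) : ℝ :=
  Filter.liminf (fun δ : ℝ => Real.log (coverNum F δ) / -Real.log δ)
    (nhdsWithin 0 (Set.Ioi 0))

/-- `α` witnesses the Assouad dimension bound for `F`. -/
def IsAssouadBound {X : Type*} [MetricSpace X] (F : Set X) (α : ℝ) : Prop :=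
  0 ≤ α ∧ ∃ C : ℝ, 0 < C ∧ ∀ x ∈ F, ∀ r R : ℝ, 0 < r → r < R →
    (coverNum (Metric.ball x R ∩ F) r : ℝ) ≤ C * (R / r) ^ α

/-- The Assouad dimension (junk value `0` if no bound exists). -/
noncomputable def assouadDim {X : Type*} [MetricSpace X] (F : Set X) : ℝ :=
  sInf {α : ℝ | IsAssouadBound F α}

/-- The upper `θ`-intermediate dimension: Hausdorff dimension at `θ = 0`,
upper box dimension at `θ = 1`, and `upperPhiDim` with `Φ(δ) = δ^(1/θ)` in between. -/
noncomputable def upperThetaDim {X : Type*} [MetricSpace X] (θ : ℝ) (F : Set X) : ℝ :=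
  if θ = 0 then (dimH F).toReal
  else if θ = 1 then upperBoxDim F
  else upperPhiDim (fun δ => δ ^ (1/θ)) F

/-- The lower `θ`-intermediate dimension. -/
noncomputable def lowerThetaDim {X : Type*} [MetricSpace X] (θ : ℝ) (F : Set X) : ℝ :=
  if θ = 0 then (dimH F).toReal
  else if θ = 1 then lowerBoxDim F
  else lowerPhiDim (fun δ => δ ^ (1/θ)) F

namespace Stmt4Aux

variable {X : Type*} [MetricSpace X]

lemma coverSet_nonempty (G : Set X) (hG : TotallyBounded G) {δ : ℝ} (hδ : 0 < δ) :
    {n : ℕ | ∃ U : Fin n → Set X, G ⊆ ⋃ i, U i ∧ ∀ i, Metric.diam (U i) ≤ δ}.Nonempty := by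
  obtain ⟨t, htf, hts⟩ := (totallyBounded_iff.mp hG) (δ/2) (by linarith)
  obtain ⟨n, f, hf⟩ := htf.fin_embedding
  refine ⟨n, fun i => Metric.ball (f i) (δ/2), ?_, fun i => ?_⟩
  · intro x hx
    obtain ⟨y, hyt, hxy⟩ := Set.mem_iUnion₂.mp (hts hx)
    rw [← hf] at hyt
    obtain ⟨i, rfl⟩ := hyt
    exact Set.mem_iUnion.2 ⟨i, hxy⟩
  · calc Metric.diam (Metric.ball (f i) (δ/2)) ≤ 2 * (δ/2) := Metric.diam_ball (by linarith)
      _ = δ := by ring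

lemma exists_coverNum_cover (G : Set X) (hG : TotallyBounded G) {δ : ℝ} (hδ : 0 < δ) :
    ∃ U : Fin (coverNum G δ) → Set X, G ⊆ ⋃ i, U i ∧ ∀ i, Metric.diam (U i) ≤ δ :=
  Nat.sInf_mem (coverSet_nonempty G hG hδ)

lemma rpow_add_le_two_rpow {a b q : ℝ} (ha : 0 ≤ a) (hb : 0 ≤ b) (hq : 0 ≤ q) :
    (a + b) ^ q ≤ 2 ^ q * (a ^ q + b ^ q) := by
  rcases le_total a b with hab | hab
  · calc (a+b)^q ≤ (2*b)^q := Real.rpow_le_rpow (by linarith) (by linarith) hq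
      _ = 2^q * b^q := Real.mul_rpow (by norm_num) hb
      _ ≤ 2^q * (a^q + b^q) := by
          have h1 : 0 ≤ a ^ q := Real.rpow_nonneg ha q
          have h2 : (0:ℝ) < 2 ^ q := Real.rpow_pos_of_pos (by norm_num) q
          nlinarith
  · calc (a+b)^q ≤ (2*a)^q := Real.rpow_le_rpow (by linarith) (by linarith) hq
      _ = 2^q * a^q := Real.mul_rpow (by norm_num) ha
      _ ≤ 2^q * (a^q + b^q) := by
          have h1 : 0 ≤ b ^ q := Real.rpow_nonneg hb q
          have h2 : (0:ℝ) < 2 ^ q := Real.rpow_pos_of_pos (by norm_num) q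
          nlinarith

lemma tendsto_div_small {f : ℝ → ℝ}
    (h : Filter.Tendsto (fun δ => f δ / δ) (nhdsWithin 0 (Set.Ioi 0)) (nhds 0))
    {γ : ℝ} (hγ : 0 < γ) : ∃ δt > 0, ∀ x : ℝ, 0 < x → x < δt → f x < γ * x := by
  rw [Metric.tendsto_nhdsWithin_nhds] at h
  obtain ⟨δt, hδt, H⟩ := h γ hγ
  refine ⟨δt, hδt, fun x hx hxδ => ?_⟩
  have h1 : dist (f x / x) 0 < γ := by
    refine H (Set.mem_Ioi.2 hx) ?_
    rw [Real.dist_eq, sub_zero, abs_of_pos hx]; exact hxδ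
  rw [Real.dist_eq, sub_zero] at h1
  have h2 : f x / x < γ := lt_of_le_of_lt (le_abs_self _) h1
  calc f x = (f x / x) * x := by field_simp
    _ < γ * x := mul_lt_mul_of_pos_right h2 hx

lemma pad_lemma (hbdd : ∀ V : Set X, Bornology.IsBounded V)
    {c : ℝ} (hup : ∀ (x : X) (R : ℝ), 0 < R →
      ENNReal.ofReal R < EMetric.diam (Set.univ : Set X) →
      ∃ y : X, dist x y < R ∧ c * R ≤ dist x y)
    {p q : X} (hpq : p ≠ q)
    (V : Set X) (z : X) {R : ℝ} (hR : 0 < R) (hRd : R < dist p q) :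
    ∃ W : Set X, V ⊆ W ∧ c * R ≤ Metric.diam W ∧
      Metric.diam W ≤ Metric.diam (insert z V) + R := by
  have hdiam : ENNReal.ofReal R < EMetric.diam (Set.univ : Set X) := by
    calc ENNReal.ofReal R < ENNReal.ofReal (dist p q) :=
          (ENNReal.ofReal_lt_ofReal_iff (dist_pos.2 hpq)).2 hRd
      _ = edist p q := (edist_dist p q).symm
      _ ≤ EMetric.diam (Set.univ : Set X) :=
          EMetric.edist_le_diam_of_mem (Set.mem_univ p) (Set.mem_univ q)
  obtain ⟨y, hy1, hy2⟩ := hup z R hR hdiam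
  refine ⟨insert z V ∪ {y}, ?_, ?_, ?_⟩
  · exact (Set.subset_insert z V).trans Set.subset_union_left
  · calc c * R ≤ dist z y := hy2
      _ ≤ Metric.diam (insert z V ∪ {y}) :=
          Metric.dist_le_diam_of_mem (hbdd _) (Or.inl (Set.mem_insert z V)) (Or.inr rfl)
  · calc Metric.diam (insert z V ∪ {y})
        ≤ Metric.diam (insert z V) + dist z y + Metric.diam ({y} : Set X) :=
          Metric.diam_union (Set.mem_insert z V) rfl
      _ ≤ Metric.diam (insert z V) + R := by
          have h0 : Metric.diam ({y} : Set X) = 0 := Metric.diam_singleton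
          rw [h0]; linarith

def PieceCover (qq L u B : ℝ) (G : Set X) : Prop :=
  ∃ (m : ℕ) (W : Fin m → Set X), G ⊆ ⋃ j, W j ∧
    (∀ j, L ≤ Metric.diam (W j) ∧ Metric.diam (W j) ≤ u) ∧
    ∑ j, Metric.diam (W j) ^ qq ≤ B

lemma PieceCover.mono_set {qq L u B : ℝ} {G G' : Set X} (h : PieceCover qq L u B G)
    (hsub : G' ⊆ G) : PieceCover qq L u B G' := by
  obtain ⟨m, W, h1, h2, h3⟩ := h
  exact ⟨m, W, hsub.trans h1, h2, h3⟩

lemma PieceCover.empty {qq L u B : ℝ} (hB : 0 ≤ B) : PieceCover qq L u B (∅ : Set X) := by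
  refine ⟨0, fun _ => ∅, by simp, fun j => j.elim0, by simpa⟩

lemma PieceCover.union {qq L u B₁ B₂ : ℝ} {G₁ G₂ : Set X}
    (h₁ : PieceCover qq L u B₁ G₁) (h₂ : PieceCover qq L u B₂ G₂) :
    PieceCover qq L u (B₁ + B₂) (G₁ ∪ G₂) := by
  obtain ⟨m₁, W₁, hc₁, hd₁, hs₁⟩ := h₁
  obtain ⟨m₂, W₂, hc₂, hd₂, hs₂⟩ := h₂
  refine ⟨m₁ + m₂, Fin.append W₁ W₂, ?_, ?_, ?_⟩
  · rintro x (hx | hx)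
    · obtain ⟨j, hj⟩ := Set.mem_iUnion.1 (hc₁ hx)
      exact Set.mem_iUnion.2 ⟨Fin.castAdd m₂ j, by rwa [Fin.append_left]⟩
    · obtain ⟨j, hj⟩ := Set.mem_iUnion.1 (hc₂ hx)
      exact Set.mem_iUnion.2 ⟨Fin.natAdd m₁ j, by rwa [Fin.append_right]⟩
  · intro j
    refine Fin.addCases (fun j1 => ?_) (fun j2 => ?_) j
    · rw [Fin.append_left]; exact hd₁ j1
    · rw [Fin.append_right]; exact hd₂ j2
  · rw [Fin.sum_univ_add]
    simp only [Fin.append_left, Fin.append_right]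
    exact add_le_add hs₁ hs₂

lemma PieceCover.biUnion {qq L u : ℝ} {n : ℕ} (G : Fin n → Set X) (B : Fin n → ℝ)
    (h : ∀ i, PieceCover qq L u (B i) (G i)) (T : Finset (Fin n)) :
    PieceCover qq L u (∑ i ∈ T, B i) (⋃ i ∈ T, G i) := by
  classical
  induction T using Finset.induction with
  | empty => simpa using PieceCover.empty (le_refl 0)
  | @insert a T ha ih =>
      rw [Finset.sum_insert ha]
      have he : (⋃ i ∈ insert a T, G i) = G a ∪ ⋃ i ∈ T, G i := by
        simp [Set.biUnion_insert]
      rw [he]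
      exact (h a).union ih

end Stmt4Aux

set_option maxHeartbeats 2000000 in
theorem stmt4 {X : Type*} [MetricSpace X] [Nontrivial X] (hX : UniformlyPerfect X)
    (Φ Φ₁ : ℝ → ℝ) (hΦ : Admissible Φ) (hΦ₁ : Admissible Φ₁)
    (F : Set X) (hne : F.Nonempty) (hTB : TotallyBounded F)
    (hAfin : ∃ α, IsAssouadBound F α) (hApos : 0 < assouadDim F)
    (hzero : upperPhiDim Φ F = 0)
    (η : ℝ) (hη : η ∈ Set.Ioo 0 (assouadDim F))
    (hcomp : ∃ b Δ : ℝ, 0 < b ∧ 0 < Δ ∧ ∀ δ ∈ Set.Ioo (0:ℝ) Δ,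
      Φ₁ (δ ^ (assouadDim F / (assouadDim F - η))) ≤ (Φ δ) ^ b) :
    upperPhiDim Φ₁ F ≤ η := by
  classical
  have hη0 : 0 < η := hη.1
  have hηA : η < assouadDim F := hη.2
  by_cases hbdd : ∀ V : Set X, Bornology.IsBounded V
  swap
  · -- unbounded space: the Assouad dimension is 0, contradiction
    push_neg at hbdd
    obtain ⟨V, hV⟩ := hbdd
    have h0 : IsAssouadBound F 0 := by
      refine ⟨le_refl 0, 1, one_pos, fun x hx r R hr hrR => ?_⟩
      have h1 : coverNum (Metric.ball x R ∩ F) r ≤ 1 := by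
        apply Nat.sInf_le
        refine ⟨fun _ : Fin 1 => V ∪ (Metric.ball x R ∩ F),
          fun y hy => Set.mem_iUnion.2 ⟨0, Or.inr hy⟩, fun _ => ?_⟩
        have hnb : ¬ Bornology.IsBounded (V ∪ (Metric.ball x R ∩ F)) :=
          fun hb => hV (hb.subset Set.subset_union_left)
        rw [Metric.diam_eq_zero_of_unbounded hnb]
        exact hr.le
      calc (coverNum (Metric.ball x R ∩ F) r : ℝ) ≤ 1 := by exact_mod_cast h1
        _ = 1 * (R/r) ^ (0:ℝ) := by rw [Real.rpow_zero]; ring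
    have hle : assouadDim F ≤ 0 := csInf_le ⟨0, fun a ha => ha.1⟩ h0
    linarith
  -- bounded case
  obtain ⟨c, hc0, hc1, hup⟩ := hX
  obtain ⟨p, q0, hpq⟩ := exists_pair_ne X
  have hdpq : 0 < dist p q0 := dist_pos.2 hpq
  obtain ⟨YΦ, hYΦ0, hΦpos, hΦtend, _⟩ := hΦ
  obtain ⟨Y₁, hY₁0, hΦ₁pos, hΦ₁tend, _⟩ := hΦ₁
  obtain ⟨b, Δ, hb0, hΔ0, hcompineq⟩ := hcomp
  obtain ⟨x₀, hx₀F⟩ := hne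
  set A := assouadDim F with hAdef
  have hAη : 0 < A - η := by linarith
  -- basic facts about the Assouad bound set
  have hAB_ne : {β : ℝ | IsAssouadBound F β}.Nonempty := hAfin
  have hAbound : ∀ h' : ℝ, A < h' → IsAssouadBound F h' := by
    intro h' hh'
    obtain ⟨α₀, hα₀, hα₀h⟩ := exists_lt_of_csInf_lt hAB_ne hh'
    obtain ⟨hα₀0, C, hC, hbound⟩ := hα₀
    refine ⟨le_trans hα₀0 hα₀h.le, C, hC, fun x hx r R hr hrR => ?_⟩
    calc (coverNum (Metric.ball x R ∩ F) r : ℝ) ≤ C * (R/r) ^ α₀ := hbound x hx r R hr hrR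
      _ ≤ C * (R/r) ^ h' := by
          refine mul_le_mul_of_nonneg_left ?_ hC.le
          refine Real.rpow_le_rpow_of_exponent_le ?_ hα₀h.le
          rw [le_div_iff₀ hr]; linarith
  -- the Φ admissible-cover set
  set SΦ : Set ℝ := {s : ℝ | 0 ≤ s ∧ ∀ ε : ℝ, 0 < ε → ∃ δ₀ ∈ Set.Ioc (0:ℝ) 1,
    ∀ δ ∈ Set.Ioo (0:ℝ) δ₀, CoverSum Φ s ε δ F} with hSΦdef
  have hSΦinf : sInf SΦ = 0 := hzero
  -- SΦ is nonempty (a box-dimension style bound)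
  have hSΦne : SΦ.Nonempty := by
    obtain ⟨-, C₀, hC₀, hC₀b⟩ := hAbound (A+1) (by linarith)
    set h₀ : ℝ := A + 1 with hh₀def
    set R₀ : ℝ := Metric.diam F + 1 with hR₀def
    have hR₀1 : 1 ≤ R₀ := by
      have := Metric.diam_nonneg (s := F); rw [hR₀def]; linarith
    have hR₀0 : 0 < R₀ := by linarith
    set K : ℝ := C₀ * 4 ^ (h₀:ℝ) * R₀ ^ (h₀:ℝ) with hKdef
    have hK0 : 0 < K :=
      mul_pos (mul_pos hC₀ (Real.rpow_pos_of_pos (by norm_num) _)) (Real.rpow_pos_of_pos hR₀0 _)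
    have hFball : F ⊆ Metric.ball x₀ R₀ := by
      intro y hy
      have := Metric.dist_le_diam_of_mem (hbdd F) hy hx₀F
      rw [Metric.mem_ball]; rw [hR₀def]; linarith
    have hballF : Metric.ball x₀ R₀ ∩ F = F := Set.inter_eq_right.2 hFball
    obtain ⟨δt, hδt0, hδts⟩ := Stmt4Aux.tendsto_div_small hΦtend (γ := c/2) (by positivity)
    refine ⟨h₀ + 1, ⟨by linarith, ?_⟩⟩
    intro ε' hε'
    refine ⟨min (min 1 YΦ) (min δt (min (c * dist p q0) (ε' / (K+1)))), ⟨?_, ?_⟩, ?_⟩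
    · refine lt_min (lt_min one_pos hYΦ0) (lt_min hδt0 (lt_min (by positivity) (by positivity)))
    · exact le_trans (min_le_left _ _) (min_le_left 1 YΦ)
    intro δ hδ
    obtain ⟨hδ0, hδlt⟩ := hδ
    have hδ1 : δ < 1 := lt_of_lt_of_le hδlt (le_trans (min_le_left _ _) (min_le_left _ _))
    have hδY : δ < YΦ := lt_of_lt_of_le hδlt (le_trans (min_le_left _ _) (min_le_right _ _))
    have hδt' : δ < δt := lt_of_lt_of_le hδlt (le_trans (min_le_right _ _) (min_le_left _ _))
    have hδc : δ < c * dist p q0 := lt_of_lt_of_le hδlt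
      (le_trans (min_le_right _ _) (le_trans (min_le_right _ _) (min_le_left _ _)))
    have hδε : δ < ε' / (K+1) := lt_of_lt_of_le hδlt
      (le_trans (min_le_right _ _) (le_trans (min_le_right _ _) (min_le_right _ _)))
    have hΦδpos : 0 < Φ δ := (hΦpos δ ⟨hδ0, hδY⟩).1
    have hΦδle : Φ δ ≤ δ := (hΦpos δ ⟨hδ0, hδY⟩).2
    have hΦsmall : Φ δ < (c/2) * δ := hδts δ hδ0 hδt'
    set R' : ℝ := Φ δ / c with hR'def
    have hR'0 : 0 < R' := by rw [hR'def]; positivity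
    have hR'd : R' < dist p q0 := by
      rw [hR'def, div_lt_iff₀ hc0]
      calc Φ δ ≤ δ := hΦδle
        _ < c * dist p q0 := hδc
        _ = dist p q0 * c := mul_comm c _
    have hR'δ : R' ≤ δ/2 := by
      rw [hR'def, div_le_iff₀ hc0]
      calc Φ δ ≤ c/2 * δ := hΦsmall.le
        _ = δ/2 * c := by ring
    have hcR' : c * R' = Φ δ := by rw [hR'def]; field_simp
    have hruR : δ/4 < R₀ := by linarith
    have hN := hC₀b x₀ hx₀F (δ/4) R₀ (by linarith) hruR
    rw [hballF] at hN
    obtain ⟨V, hVcov, hVdiam⟩ := Stmt4Aux.exists_coverNum_cover F hTB (δ := δ/4) (by linarith)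
    have hWj : ∀ j : Fin (coverNum F (δ/4)), ∃ W : Set X,
        V j ⊆ W ∧ Φ δ ≤ Metric.diam W ∧ Metric.diam W ≤ δ/4 + R' := by
      intro j
      by_cases hVj : (V j).Nonempty
      · obtain ⟨z, hz⟩ := hVj
        obtain ⟨W, hW1, hW2, hW3⟩ := Stmt4Aux.pad_lemma hbdd hup hpq (V j) z hR'0 hR'd
        rw [Set.insert_eq_self.2 hz] at hW3
        exact ⟨W, hW1, by rw [← hcR']; exact hW2,
          hW3.trans (add_le_add (hVdiam j) le_rfl)⟩
      · obtain ⟨W, hW1, hW2, hW3⟩ := Stmt4Aux.pad_lemma hbdd hup hpq (V j) x₀ hR'0 hR'd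
        rw [Set.not_nonempty_iff_eq_empty.1 hVj] at hW1 hW3
        have hins : Metric.diam (insert x₀ (∅ : Set X)) = 0 := by
          simp
        rw [hins] at hW3
        refine ⟨W, by rw [Set.not_nonempty_iff_eq_empty.1 hVj]; exact Set.empty_subset W,
          by rw [← hcR']; exact hW2, by linarith⟩
    choose W hWsub hWlow hWhigh using hWj
    refine ⟨coverNum F (δ/4), W, ?_, fun j => ⟨hWlow j, ?_⟩, ?_⟩
    · intro x hx
      obtain ⟨j, hj⟩ := Set.mem_iUnion.1 (hVcov hx)
      exact Set.mem_iUnion.2 ⟨j, hWsub j hj⟩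
    · have := hWhigh j; linarith
    · have hstep : ∀ j : Fin (coverNum F (δ/4)),
          Metric.diam (W j) ^ (h₀+1 : ℝ) ≤ δ ^ (h₀+1 : ℝ) := by
        intro j
        refine Real.rpow_le_rpow Metric.diam_nonneg ?_ (by linarith)
        have := hWhigh j; linarith
      calc ∑ j, Metric.diam (W j) ^ (h₀+1:ℝ)
          ≤ ∑ _j : Fin (coverNum F (δ/4)), δ ^ (h₀+1:ℝ) :=
            Finset.sum_le_sum (fun j _ => hstep j)
        _ = (coverNum F (δ/4) : ℝ) * δ ^ (h₀+1:ℝ) := by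
            rw [Finset.sum_const, Finset.card_univ, Fintype.card_fin, nsmul_eq_mul]
        _ ≤ (C₀ * (R₀/(δ/4)) ^ (h₀:ℝ)) * δ ^ (h₀+1:ℝ) := by
            refine mul_le_mul_of_nonneg_right hN (Real.rpow_nonneg hδ0.le _)
        _ = K * δ := by
            have he : R₀/(δ/4) = 4 * R₀ / δ := by field_simp
            have hδh : δ ^ (h₀:ℝ) ≠ 0 := ne_of_gt (Real.rpow_pos_of_pos hδ0 _)
            have key : ∀ (a bb d e : ℝ), d ≠ 0 → a * (bb / d) * (d * e) = a * bb * e := by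
              intro a bb d e hd; field_simp
            rw [he, Real.div_rpow (by positivity) hδ0.le,
              Real.mul_rpow (by norm_num) hR₀0.le, Real.rpow_add hδ0 h₀ 1, Real.rpow_one, hKdef,
              key _ _ _ _ hδh]
            ring
        _ ≤ ε' := by
            rw [lt_div_iff₀ (by linarith : (0:ℝ) < K + 1)] at hδε
            have h9 : K * δ ≤ δ * (K + 1) := by nlinarith [hδ0.le]
            linarith
  -- main estimate: for every ρ ∈ (0,1], upperPhiDim Φ₁ F ≤ η + ρ
  have hmain : ∀ ρ : ℝ, 0 < ρ → ρ ≤ 1 → upperPhiDim Φ₁ F ≤ η + ρ := by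
    intro ρ hρ0 hρ1
    have hApos' : 0 < A := hApos
    set q : ℝ := η + ρ with hqdef
    have hq0 : 0 < q := by rw [hqdef]; linarith
    have hmem : q ∈ {s : ℝ | 0 ≤ s ∧ ∀ ε : ℝ, 0 < ε → ∃ δ₀ ∈ Set.Ioc (0:ℝ) 1,
        ∀ δ ∈ Set.Ioo (0:ℝ) δ₀, CoverSum Φ₁ s ε δ F} := by
      refine ⟨hq0.le, ?_⟩
      intro ε hε
      -- parameters
      set h₁ : ℝ := A + A * ρ / (2 * η) with hh₁def
      have hh₁A : A < h₁ := by
        rw [hh₁def]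
        have : 0 < A * ρ / (2 * η) := by positivity
        linarith
      obtain ⟨-, C, hC0, hCb⟩ := hAbound h₁ hh₁A
      set st : ℝ := min (b*η) (min η (ρ*A/(2*(A-η)))) with hstdef
      have hst0 : 0 < st :=
        lt_min (by positivity) (lt_min hη0 (by positivity))
      obtain ⟨sv, hsvSΦ, hsvlt⟩ := exists_lt_of_csInf_lt hSΦne (by rw [hSΦinf]; exact hst0)
      obtain ⟨hsv0, hsvcov⟩ := hsvSΦ
      have hsvbη : sv < b*η := lt_of_lt_of_le hsvlt (min_le_left _ _)
      have hsvη : sv < η := lt_of_lt_of_le hsvlt (le_trans (min_le_right _ _) (min_le_left _ _))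
      have hsvρ : sv ≤ ρ*A/(2*(A-η)) :=
        le_of_lt (lt_of_lt_of_le hsvlt (le_trans (min_le_right _ _) (min_le_right _ _)))
      have hsvh₁ : sv < h₁ := by linarith
      set κ : ℝ := 2^(q:ℝ) + 2^(q:ℝ)/c^(q:ℝ) + C * 8^(h₁:ℝ) with hκdef
      have h2q : (0:ℝ) < 2^(q:ℝ) := Real.rpow_pos_of_pos (by norm_num) _
      have hcq : (0:ℝ) < c^(q:ℝ) := Real.rpow_pos_of_pos hc0 _
      have h8h : (0:ℝ) < 8^(h₁:ℝ) := Real.rpow_pos_of_pos (by norm_num) _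
      have hκ0 : 0 < κ := by
        rw [hκdef]
        have : (0:ℝ) < 2^(q:ℝ)/c^(q:ℝ) := by positivity
        have : (0:ℝ) < C * 8^(h₁:ℝ) := by positivity
        positivity
      set ε'' : ℝ := ε / κ with hε''def
      have hε''0 : 0 < ε'' := by rw [hε''def]; positivity
      obtain ⟨δv, hδvIoc, hδvcov⟩ := hsvcov ε'' hε''0
      obtain ⟨δt₁, hδt₁0, hδt₁s⟩ := Stmt4Aux.tendsto_div_small hΦ₁tend (γ := c/4) (by positivity)
      -- α facts
      set αx : ℝ := A / (A - η) with hαdef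
      have hα1 : 1 < αx := by
        rw [hαdef, lt_div_iff₀ hAη]; linarith
      have hα0 : 0 < αx := by linarith
      have hαinv0 : 0 < αx⁻¹ := by positivity
      have hαinv : αx⁻¹ = (A-η)/A := by
        rw [hαdef, inv_div]
      -- thresholds
      set m1 : ℝ := min (min YΦ Δ) (min δv 1) with hm1def
      have hm10 : 0 < m1 :=
        lt_min (lt_min hYΦ0 hΔ0) (lt_min hδvIoc.1 one_pos)
      set δ₀ : ℝ := min (m1 ^ (αx:ℝ)) (min Y₁ (min δt₁ (min (c * dist p q0) 1))) with hδ₀def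
      have hδ₀0 : 0 < δ₀ := by
        refine lt_min (Real.rpow_pos_of_pos hm10 _)
          (lt_min hY₁0 (lt_min hδt₁0 (lt_min (by positivity) one_pos)))
      refine ⟨min δ₀ 1, ⟨lt_min hδ₀0 one_pos, min_le_right _ _⟩, ?_⟩
      intro u hu
      obtain ⟨hu0, huδ₀'⟩ := hu
      have huδ₀ : u < δ₀ := lt_of_lt_of_le huδ₀' (min_le_left _ _)
      have hu1 : u < 1 := lt_of_lt_of_le huδ₀
        (le_trans (min_le_right _ _) (le_trans (min_le_right _ _)
          (le_trans (min_le_right _ _) (min_le_right _ _))))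
      have huY₁ : u < Y₁ := lt_of_lt_of_le huδ₀ (le_trans (min_le_right _ _) (min_le_left _ _))
      have huδt₁ : u < δt₁ := lt_of_lt_of_le huδ₀
        (le_trans (min_le_right _ _) (le_trans (min_le_right _ _) (min_le_left _ _)))
      have hucd : u < c * dist p q0 := lt_of_lt_of_le huδ₀
        (le_trans (min_le_right _ _) (le_trans (min_le_right _ _)
          (le_trans (min_le_right _ _) (min_le_left _ _))))
      have hum : u < m1 ^ (αx:ℝ) := lt_of_lt_of_le huδ₀ (min_le_left _ _)
      -- the companion scale v
      set v : ℝ := u ^ (αx⁻¹ : ℝ) with hvdef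
      have hv0 : 0 < v := Real.rpow_pos_of_pos hu0 _
      have hvα : v ^ (αx:ℝ) = u := by
        rw [hvdef, ← Real.rpow_mul hu0.le, inv_mul_cancel₀ (ne_of_gt hα0), Real.rpow_one]
      have hum1 : m1 ≤ 1 := le_trans (min_le_right _ _) (min_le_right _ _)
      have hvm1 : v < m1 := by
        have h' : u ^ (αx⁻¹:ℝ) < (m1 ^ (αx:ℝ)) ^ (αx⁻¹:ℝ) :=
          Real.rpow_lt_rpow hu0.le hum hαinv0
        rwa [← Real.rpow_mul hm10.le, mul_inv_cancel₀ (ne_of_gt hα0), Real.rpow_one] at h'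
      have hvY : v < YΦ := lt_of_lt_of_le hvm1 (le_trans (min_le_left _ _) (min_le_left _ _))
      have hvΔ : v < Δ := lt_of_lt_of_le hvm1 (le_trans (min_le_left _ _) (min_le_right _ _))
      have hvδv : v < δv := lt_of_lt_of_le hvm1 (le_trans (min_le_right _ _) (min_le_left _ _))
      have hv1 : v < 1 := lt_of_lt_of_le hvm1 hum1
      have hΦv0 : 0 < Φ v := (hΦpos v ⟨hv0, hvY⟩).1
      have hΦvv : Φ v ≤ v := (hΦpos v ⟨hv0, hvY⟩).2
      have hΦv1 : Φ v ≤ 1 := le_trans hΦvv hv1.le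
      have hΦ₁u0 : 0 < Φ₁ u := (hΦ₁pos u ⟨hu0, huY₁⟩).1
      have hΦ₁uu : Φ₁ u ≤ u := (hΦ₁pos u ⟨hu0, huY₁⟩).2
      have hΦ₁usmall : Φ₁ u < (c/4) * u := hδt₁s u hu0 huδt₁
      have hΦ₁Φ : Φ₁ u ≤ Φ v ^ (b:ℝ) := by
        have h' := hcompineq v ⟨hv0, hvΔ⟩
        rwa [hvα] at h'
      -- cover at scale v
      obtain ⟨n, U, hFU, hUd, hUs⟩ := hδvcov v ⟨hv0, hvδv⟩
      set R : ℝ := Φ₁ u / c with hRdef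
      have hR0 : 0 < R := by rw [hRdef]; positivity
      have hRd : R < dist p q0 := by
        rw [hRdef, div_lt_iff₀ hc0]
        calc Φ₁ u ≤ u := hΦ₁uu
          _ < c * dist p q0 := hucd
          _ = dist p q0 * c := mul_comm c _
      have hRu4 : R ≤ u / 4 := by
        rw [hRdef, div_le_iff₀ hc0]
        calc Φ₁ u ≤ c/4 * u := hΦ₁usmall.le
          _ = u/4 * c := by ring
      have hcR : c * R = Φ₁ u := by rw [hRdef]; field_simp
      have hd0 : ∀ i, 0 < Metric.diam (U i) := fun i => lt_of_lt_of_le hΦv0 (hUd i).1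
      have hdv : ∀ i, Metric.diam (U i) ≤ v := fun i => (hUd i).2
      set B : Fin n → ℝ := fun i =>
        2^(q:ℝ) * Metric.diam (U i)^(q:ℝ) + 2^(q:ℝ) * (Φ₁ u / c)^(q:ℝ)
          + C * 8^(h₁:ℝ) * Metric.diam (U i)^(h₁:ℝ) * u^(q - h₁ : ℝ) with hBdef
      have hBnn : ∀ i, 0 ≤ B i := by
        intro i
        have h1 : (0:ℝ) ≤ Metric.diam (U i)^(q:ℝ) := Real.rpow_nonneg Metric.diam_nonneg _
        have h2 : (0:ℝ) ≤ (Φ₁ u / c)^(q:ℝ) := Real.rpow_nonneg (by positivity) _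
        have h3 : (0:ℝ) ≤ Metric.diam (U i)^(h₁:ℝ) := Real.rpow_nonneg Metric.diam_nonneg _
        have h4 : (0:ℝ) ≤ u^(q - h₁:ℝ) := Real.rpow_nonneg hu0.le _
        simp only [hBdef]
        exact add_nonneg (add_nonneg (mul_nonneg h2q.le h1) (mul_nonneg h2q.le h2))
          (mul_nonneg (mul_nonneg (mul_nonneg hC0.le h8h.le) h3) h4)
      have hpiece : ∀ i, Stmt4Aux.PieceCover q (Φ₁ u) u (B i) (U i ∩ F) := by
        intro i
        have h2' : (0:ℝ) ≤ 2^(q:ℝ) * (Φ₁ u / c)^(q:ℝ) :=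
          mul_nonneg h2q.le (Real.rpow_nonneg (by positivity) _)
        have h3' : (0:ℝ) ≤ C * 8^(h₁:ℝ) * Metric.diam (U i)^(h₁:ℝ) * u^(q - h₁:ℝ) :=
          mul_nonneg (mul_nonneg (mul_nonneg hC0.le h8h.le)
            (Real.rpow_nonneg Metric.diam_nonneg _)) (Real.rpow_nonneg hu0.le _)
        have h1' : (0:ℝ) ≤ 2^(q:ℝ) * Metric.diam (U i)^(q:ℝ) :=
          mul_nonneg h2q.le (Real.rpow_nonneg Metric.diam_nonneg _)
        by_cases hsmall : Metric.diam (U i) ≤ u/2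
        · have hUine : (U i).Nonempty := by
            rw [Set.nonempty_iff_ne_empty]
            intro hemp
            have h'' := hd0 i
            rw [hemp, Metric.diam_empty] at h''
            exact lt_irrefl 0 h''
          obtain ⟨z, hz⟩ := hUine
          obtain ⟨W, hW1, hW2, hW3⟩ := Stmt4Aux.pad_lemma hbdd hup hpq (U i) z hR0 hRd
          rw [Set.insert_eq_self.2 hz] at hW3
          refine ⟨1, fun _ => W, ?_, fun j => ⟨?_, ?_⟩, ?_⟩
          · intro x hx
            exact Set.mem_iUnion.2 ⟨0, hW1 hx.1⟩
          · rw [← hcR]; exact hW2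
          · calc Metric.diam W ≤ Metric.diam (U i) + R := hW3
              _ ≤ u/2 + u/4 := add_le_add hsmall hRu4
              _ ≤ u := by linarith
          · have hmain1 : Metric.diam W ^ (q:ℝ) ≤ B i := by
              calc Metric.diam W ^ (q:ℝ)
                  ≤ (Metric.diam (U i) + R)^(q:ℝ) :=
                    Real.rpow_le_rpow Metric.diam_nonneg hW3 hq0.le
                _ ≤ 2^(q:ℝ) * (Metric.diam (U i)^(q:ℝ) + R^(q:ℝ)) :=
                    Stmt4Aux.rpow_add_le_two_rpow Metric.diam_nonneg hR0.le hq0.le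
                _ = 2^(q:ℝ) * Metric.diam (U i)^(q:ℝ) + 2^(q:ℝ) * (Φ₁ u/c)^(q:ℝ) := by
                    rw [hRdef]; ring
                _ ≤ B i := by simp only [hBdef]; linarith
            simpa using hmain1
        · push_neg at hsmall
          by_cases hiF : (U i ∩ F).Nonempty
          · obtain ⟨x, hxU, hxF⟩ := hiF
            have hsub : U i ∩ F ⊆ Metric.ball x (2 * Metric.diam (U i)) ∩ F := by
              rintro y ⟨hyU, hyF⟩
              refine ⟨?_, hyF⟩
              rw [Metric.mem_ball]
              have hle := Metric.dist_le_diam_of_mem (hbdd (U i)) hyU hxU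
              have := hd0 i
              linarith
            have hru : (0:ℝ) < u/4 := by linarith
            have hrR : u/4 < 2 * Metric.diam (U i) := by linarith [hd0 i]
            have hN := hCb x hxF (u/4) (2 * Metric.diam (U i)) hru hrR
            have hTBsub : TotallyBounded (Metric.ball x (2*Metric.diam (U i)) ∩ F) :=
              hTB.subset Set.inter_subset_right
            obtain ⟨V, hVcov, hVdiam⟩ := Stmt4Aux.exists_coverNum_cover _ hTBsub hru
            have hWj : ∀ j : Fin (coverNum (Metric.ball x (2*Metric.diam (U i)) ∩ F) (u/4)),
                ∃ W : Set X, V j ⊆ W ∧ Φ₁ u ≤ Metric.diam W ∧ Metric.diam W ≤ u/4 + R := by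
              intro j
              by_cases hVj : (V j).Nonempty
              · obtain ⟨z, hz⟩ := hVj
                obtain ⟨W, hW1, hW2, hW3⟩ := Stmt4Aux.pad_lemma hbdd hup hpq (V j) z hR0 hRd
                rw [Set.insert_eq_self.2 hz] at hW3
                exact ⟨W, hW1, by rw [← hcR]; exact hW2,
                  hW3.trans (add_le_add (hVdiam j) le_rfl)⟩
              · obtain ⟨W, hW1, hW2, hW3⟩ := Stmt4Aux.pad_lemma hbdd hup hpq (V j) x₀ hR0 hRd
                rw [Set.not_nonempty_iff_eq_empty.1 hVj] at hW3
                have hins : Metric.diam (insert x₀ (∅ : Set X)) = 0 := by simp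
                rw [hins] at hW3
                refine ⟨W, ?_, by rw [← hcR]; exact hW2, by linarith⟩
                rw [Set.not_nonempty_iff_eq_empty.1 hVj]
                exact Set.empty_subset W
            choose Wb hWbsub hWblow hWbhigh using hWj
            refine ⟨_, Wb, ?_, fun j => ⟨hWblow j, ?_⟩, ?_⟩
            · intro y hy
              obtain ⟨j, hj⟩ := Set.mem_iUnion.1 (hVcov (hsub hy))
              exact Set.mem_iUnion.2 ⟨j, hWbsub j hj⟩
            · have := hWbhigh j; linarith
            · have hperp : ∀ j, Metric.diam (Wb j) ^ (q:ℝ) ≤ u ^ (q:ℝ) := by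
                intro j
                refine Real.rpow_le_rpow Metric.diam_nonneg ?_ hq0.le
                have := hWbhigh j; linarith
              calc ∑ j, Metric.diam (Wb j) ^ (q:ℝ)
                  ≤ ∑ _j : Fin (coverNum (Metric.ball x (2*Metric.diam (U i)) ∩ F) (u/4)),
                      u^(q:ℝ) :=
                    Finset.sum_le_sum (fun j _ => hperp j)
                _ = (coverNum (Metric.ball x (2*Metric.diam (U i)) ∩ F) (u/4) : ℝ) * u^(q:ℝ) := by
                    rw [Finset.sum_const, Finset.card_univ, Fintype.card_fin, nsmul_eq_mul]
                _ ≤ (C * ((2*Metric.diam (U i))/(u/4))^(h₁:ℝ)) * u^(q:ℝ) :=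
                    mul_le_mul_of_nonneg_right hN (Real.rpow_nonneg hu0.le _)
                _ = C * 8^(h₁:ℝ) * Metric.diam (U i)^(h₁:ℝ) * u^(q-h₁:ℝ) := by
                    have he : (2*Metric.diam (U i))/(u/4) = 8 * Metric.diam (U i) / u := by
                      field_simp; ring
                    have huh : u ^ (h₁:ℝ) ≠ 0 := ne_of_gt (Real.rpow_pos_of_pos hu0 _)
                    rw [he, Real.div_rpow (mul_nonneg (by norm_num) Metric.diam_nonneg) hu0.le,
                      Real.mul_rpow (by norm_num) Metric.diam_nonneg,
                      Real.rpow_sub hu0]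
                    ring
                _ ≤ B i := by simp only [hBdef]; linarith
          · have hemp : U i ∩ F = ∅ := Set.not_nonempty_iff_eq_empty.1 hiF
            rw [hemp]
            exact Stmt4Aux.PieceCover.empty (hBnn i)
      -- assemble
      have hglue := Stmt4Aux.PieceCover.biUnion (fun i => U i ∩ F) B hpiece Finset.univ
      have hFsub : F ⊆ ⋃ i ∈ Finset.univ, (U i ∩ F) := by
        intro x hx
        obtain ⟨i, hi⟩ := Set.mem_iUnion.1 (hFU hx)
        exact Set.mem_iUnion₂.2 ⟨i, Finset.mem_univ i, ⟨hi, hx⟩⟩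
      have hFcov := hglue.mono_set hFsub
      -- the budget bound
      have hSs : ∑ i, Metric.diam (U i) ^ (sv:ℝ) ≤ ε'' := hUs
      have hd1 : ∀ i, Metric.diam (U i) ≤ 1 := fun i => le_trans (hdv i) hv1.le
      have hSq : ∑ i, Metric.diam (U i) ^ (q:ℝ) ≤ ε'' := by
        refine le_trans (Finset.sum_le_sum (fun i _ => ?_)) hSs
        refine Real.rpow_le_rpow_of_exponent_ge (hd0 i) (hd1 i) ?_
        rw [hqdef]; linarith
      have hSh : ∑ i, Metric.diam (U i) ^ (h₁:ℝ) ≤ v ^ (h₁ - sv : ℝ) * ε'' := by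
        calc ∑ i, Metric.diam (U i) ^ (h₁:ℝ)
            ≤ ∑ i, v ^ (h₁ - sv:ℝ) * Metric.diam (U i) ^ (sv:ℝ) := by
              refine Finset.sum_le_sum (fun i _ => ?_)
              have e1 : Metric.diam (U i) ^ (h₁:ℝ)
                  = Metric.diam (U i) ^ (h₁ - sv:ℝ) * Metric.diam (U i) ^ (sv:ℝ) := by
                rw [← Real.rpow_add (hd0 i)]; ring_nf
              rw [e1]
              refine mul_le_mul_of_nonneg_right ?_ (Real.rpow_nonneg Metric.diam_nonneg _)
              exact Real.rpow_le_rpow Metric.diam_nonneg (hdv i) (by linarith)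
          _ = v ^ (h₁ - sv:ℝ) * ∑ i, Metric.diam (U i) ^ (sv:ℝ) := by
              rw [Finset.mul_sum]
          _ ≤ v ^ (h₁ - sv:ℝ) * ε'' :=
              mul_le_mul_of_nonneg_left hSs (Real.rpow_nonneg hv0.le _)
      have hcount : (n:ℝ) * Φ v ^ (sv:ℝ) ≤ ε'' := by
        have h2 : ∑ _i : Fin n, Φ v ^ (sv:ℝ) ≤ ∑ i, Metric.diam (U i) ^ (sv:ℝ) :=
          Finset.sum_le_sum (fun i _ => Real.rpow_le_rpow hΦv0.le (hUd i).1 hsv0)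
        rw [Finset.sum_const, Finset.card_univ, Fintype.card_fin, nsmul_eq_mul] at h2
        exact le_trans h2 hSs
      have hmid : (n:ℝ) * (2^(q:ℝ) * (Φ₁ u / c)^(q:ℝ)) ≤ 2^(q:ℝ)/c^(q:ℝ) * ε'' := by
        have e1 : (Φ₁ u / c)^(q:ℝ) = Φ₁ u^(q:ℝ) / c^(q:ℝ) := Real.div_rpow hΦ₁u0.le hc0.le _
        have e2 : Φ₁ u^(q:ℝ) ≤ Φ v ^ (sv:ℝ) * Φ v ^ (b*q - sv:ℝ) := by
          calc Φ₁ u^(q:ℝ) ≤ (Φ v^(b:ℝ))^(q:ℝ) :=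
                Real.rpow_le_rpow hΦ₁u0.le hΦ₁Φ hq0.le
            _ = Φ v^(b*q:ℝ) := (Real.rpow_mul hΦv0.le b q).symm
            _ = Φ v ^ (sv:ℝ) * Φ v ^ (b*q - sv:ℝ) := by
                rw [← Real.rpow_add hΦv0]; ring_nf
        have e3 : Φ v ^ (b*q - sv:ℝ) ≤ 1 := by
          refine Real.rpow_le_one hΦv0.le hΦv1 ?_
          have hbq : b*η ≤ b*q := by
            refine mul_le_mul_of_nonneg_left ?_ hb0.le
            rw [hqdef]; linarith
          linarith
        have e4 : (n:ℝ) * Φ₁ u ^ (q:ℝ) ≤ ε'' := by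
          calc (n:ℝ) * Φ₁ u ^ (q:ℝ)
              ≤ (n:ℝ) * (Φ v ^ (sv:ℝ) * Φ v ^ (b*q - sv:ℝ)) :=
                mul_le_mul_of_nonneg_left e2 (Nat.cast_nonneg n)
            _ ≤ (n:ℝ) * (Φ v ^ (sv:ℝ) * 1) := by
                refine mul_le_mul_of_nonneg_left ?_ (Nat.cast_nonneg n)
                exact mul_le_mul_of_nonneg_left e3 (Real.rpow_nonneg hΦv0.le _)
            _ = (n:ℝ) * Φ v ^ (sv:ℝ) := by ring
            _ ≤ ε'' := hcount
        calc (n:ℝ) * (2^(q:ℝ) * (Φ₁ u / c)^(q:ℝ))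
            = 2^(q:ℝ)/c^(q:ℝ) * ((n:ℝ) * Φ₁ u^(q:ℝ)) := by rw [e1]; ring
          _ ≤ 2^(q:ℝ)/c^(q:ℝ) * ε'' := mul_le_mul_of_nonneg_left e4 (by positivity)
      -- exponent inequality
      have hA0' : A ≠ 0 := ne_of_gt hApos'
      have hE : 0 ≤ (q - h₁) + αx⁻¹ * (h₁ - sv) := by
        rw [hαinv]
        have hexp : (q - h₁) + (A-η)/A * (h₁ - sv)
            = (A*q - η*h₁ - (A-η)*sv) / A := by
          field_simp
          ring
        rw [hexp]
        refine div_nonneg ?_ hApos'.le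
        have h5 : η * h₁ = η * A + A*ρ/2 := by
          rw [hh₁def]; field_simp
        have h6 : (A-η) * sv ≤ ρ*A/2 := by
          calc (A-η)*sv ≤ (A-η)*(ρ*A/(2*(A-η))) :=
              mul_le_mul_of_nonneg_left hsvρ hAη.le
            _ = ρ*A/2 := by field_simp
        rw [hqdef, h5]
        linarith [h6]
      have hthird : C * 8^(h₁:ℝ) * u^(q-h₁:ℝ) * (v^(h₁-sv:ℝ) * ε'') ≤ C * 8^(h₁:ℝ) * ε'' := by
        have e5 : v^(h₁-sv:ℝ) = u ^ (αx⁻¹ * (h₁ - sv) : ℝ) := by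
          rw [hvdef, ← Real.rpow_mul hu0.le]
        have e6 : u^(q-h₁:ℝ) * u^(αx⁻¹*(h₁-sv):ℝ) = u ^ ((q-h₁) + αx⁻¹*(h₁-sv) : ℝ) :=
          (Real.rpow_add hu0 _ _).symm
        have e7 : u ^ ((q-h₁) + αx⁻¹*(h₁-sv) : ℝ) ≤ 1 :=
          Real.rpow_le_one hu0.le hu1.le hE
        calc C * 8^(h₁:ℝ) * u^(q-h₁:ℝ) * (v^(h₁-sv:ℝ) * ε'')
            = C * 8^(h₁:ℝ) * (u^(q-h₁:ℝ) * u^(αx⁻¹*(h₁-sv):ℝ)) * ε'' := by rw [e5]; ring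
          _ = C * 8^(h₁:ℝ) * u ^ ((q-h₁) + αx⁻¹*(h₁-sv) : ℝ) * ε'' := by rw [e6]
          _ ≤ C * 8^(h₁:ℝ) * 1 * ε'' := by
              refine mul_le_mul_of_nonneg_right ?_ hε''0.le
              exact mul_le_mul_of_nonneg_left e7 (by positivity)
          _ = C * 8^(h₁:ℝ) * ε'' := by ring
      -- total
      have hsumB : ∑ i, B i ≤ ε := by
        have hsplit : ∑ i, B i
            = 2^(q:ℝ) * (∑ i, Metric.diam (U i)^(q:ℝ))
              + (n:ℝ) * (2^(q:ℝ) * (Φ₁ u / c)^(q:ℝ))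
              + C * 8^(h₁:ℝ) * u^(q-h₁:ℝ) * (∑ i, Metric.diam (U i)^(h₁:ℝ)) := by
          simp only [hBdef]
          rw [Finset.sum_add_distrib, Finset.sum_add_distrib]
          congr 1
          · congr 1
            · rw [Finset.mul_sum]
            · rw [Finset.sum_const, Finset.card_univ, Fintype.card_fin, nsmul_eq_mul]
          · rw [Finset.mul_sum]
            exact Finset.sum_congr rfl (fun i _ => by ring)
        rw [hsplit]
        have t1 : 2^(q:ℝ) * (∑ i, Metric.diam (U i)^(q:ℝ)) ≤ 2^(q:ℝ) * ε'' :=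
          mul_le_mul_of_nonneg_left hSq h2q.le
        have t3 : C * 8^(h₁:ℝ) * u^(q-h₁:ℝ) * (∑ i, Metric.diam (U i)^(h₁:ℝ))
            ≤ C * 8^(h₁:ℝ) * ε'' := by
          refine le_trans ?_ hthird
          refine mul_le_mul_of_nonneg_left hSh ?_
          have h7 : (0:ℝ) ≤ u^(q-h₁:ℝ) := Real.rpow_nonneg hu0.le _
          exact mul_nonneg (mul_nonneg hC0.le h8h.le) h7
        have htot : 2^(q:ℝ) * ε'' + 2^(q:ℝ)/c^(q:ℝ) * ε'' + C * 8^(h₁:ℝ) * ε'' = ε := by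
          have hκmul : 2^(q:ℝ) * ε'' + 2^(q:ℝ)/c^(q:ℝ) * ε'' + C * 8^(h₁:ℝ) * ε'' = κ * ε'' := by
            rw [hκdef]; ring
          rw [hκmul, hε''def, mul_comm, div_mul_cancel₀ _ (ne_of_gt hκ0)]
        linarith [hmid]
      obtain ⟨m, Wf, hWf1, hWf2, hWf3⟩ := hFcov
      exact ⟨m, Wf, hWf1, hWf2, hWf3.trans hsumB⟩
    have hrfl : upperPhiDim Φ₁ F = sInf {s : ℝ | 0 ≤ s ∧ ∀ ε : ℝ, 0 < ε →
        ∃ δ₀ ∈ Set.Ioc (0:ℝ) 1, ∀ δ ∈ Set.Ioo (0:ℝ) δ₀, CoverSum Φ₁ s ε δ F} := rfl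
    rw [hrfl]
    exact csInf_le ⟨0, fun a ha => ha.1⟩ hmem
  -- conclude
  by_contra hcon
  push_neg at hcon
  have h1 := hmain (min ((upperPhiDim Φ₁ F - η)/2) 1)
    (lt_min (by linarith) one_pos) (min_le_right _ _)
  have h2 : min ((upperPhiDim Φ₁ F - η)/2) 1 ≤ (upperPhiDim Φ₁ F - η)/2 := min_le_left _ _
  linarith
end

section
/- Let F be a non-empty totally bounded subset of a uniformly perfect metric space with more than one point, with 0 < dim_A F < ∞, and let θ ∈ (0,1). Then the map θ' ↦ dim_{θ'}_upper F is Lipschitz on [θ,1] with Lipschitz constant dim_A F/(4θ); the same holds for θ' ↦ dim_{θ'}_lower F. -/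
open Metric Set Filter MeasureTheory Topology

section Aux

open Bornology

variable {X : Type*} [MetricSpace X]

lemma coverSum_of_fintype {Φ : ℝ → ℝ} {s ε δ : ℝ} {F : Set X} {ι : Type*} [Fintype ι]
    (U : ι → Set X) (hcov : F ⊆ ⋃ i, U i)
    (hd : ∀ i, Φ δ ≤ Metric.diam (U i) ∧ Metric.diam (U i) ≤ δ)
    (hsum : ∑ i, Metric.diam (U i) ^ s ≤ ε) : CoverSum Φ s ε δ F := by
  refine ⟨Fintype.card ι, fun j => U ((Fintype.equivFin ι).symm j), ?_, fun j => hd _, ?_⟩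
  · intro x hx
    obtain ⟨i, hi⟩ := mem_iUnion.1 (hcov hx)
    exact mem_iUnion.2 ⟨Fintype.equivFin ι i, by simpa using hi⟩
  · refine le_trans (le_of_eq ?_) hsum
    exact Fintype.sum_equiv (Fintype.equivFin ι).symm _ _ (fun j => rfl)

lemma coverNum_mem_of_cover {F : Set X} {δ : ℝ} {ι : Type*} [Fintype ι]
    (U : ι → Set X) (h1 : F ⊆ ⋃ i, U i) (h2 : ∀ i, Metric.diam (U i) ≤ δ) :
    Fintype.card ι ∈ {n : ℕ | ∃ V : Fin n → Set X, F ⊆ ⋃ i, V i ∧ ∀ i, Metric.diam (V i) ≤ δ} := by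
  refine ⟨fun j => U ((Fintype.equivFin ι).symm j), ?_, fun j => h2 _⟩
  intro x hx
  obtain ⟨i, hi⟩ := mem_iUnion.1 (h1 hx)
  exact mem_iUnion.2 ⟨Fintype.equivFin ι i, by simpa using hi⟩

lemma coverNum_le_of_cover {F : Set X} {δ : ℝ} {ι : Type*} [Fintype ι]
    (U : ι → Set X) (h1 : F ⊆ ⋃ i, U i) (h2 : ∀ i, Metric.diam (U i) ≤ δ) :
    coverNum F δ ≤ Fintype.card ι :=
  Nat.sInf_le (coverNum_mem_of_cover U h1 h2)

lemma coverSet_nonempty {S : Set X} (h : TotallyBounded S) {r : ℝ} (hr : 0 < r) :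
    {n : ℕ | ∃ V : Fin n → Set X, S ⊆ ⋃ i, V i ∧ ∀ i, Metric.diam (V i) ≤ r}.Nonempty := by
  obtain ⟨t, htf, hts⟩ := (Metric.totallyBounded_iff.1 h) (r/3) (by linarith)
  haveI := htf.fintype
  refine ⟨_, coverNum_mem_of_cover (ι := ↥t) (fun y => Metric.ball (y : X) (r/3)) ?_ ?_⟩
  · intro x hx
    obtain ⟨y, hy, hxy⟩ := mem_iUnion₂.1 (hts hx)
    exact mem_iUnion.2 ⟨⟨y, hy⟩, hxy⟩
  · intro y
    calc Metric.diam (Metric.ball (y:X) (r/3)) ≤ 2 * (r/3) := Metric.diam_ball (by linarith)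
    _ ≤ r := by linarith

lemma coverNum_spec {S : Set X} (h : TotallyBounded S) {r : ℝ} (hr : 0 < r) :
    ∃ V : Fin (coverNum S r) → Set X, S ⊆ ⋃ i, V i ∧ ∀ i, Metric.diam (V i) ≤ r :=
  Nat.sInf_mem (coverSet_nonempty h hr)

lemma one_le_coverNum {S : Set X} (hS : S.Nonempty) (h : TotallyBounded S) {r : ℝ} (hr : 0 < r) :
    1 ≤ coverNum S r := by
  rcases Nat.eq_zero_or_pos (coverNum S r) with h0 | h1
  · obtain ⟨V, hV, -⟩ := coverNum_spec h hr
    obtain ⟨x, hx⟩ := hS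
    obtain ⟨i, -⟩ := mem_iUnion.1 (hV hx)
    have := i.isLt
    omega
  · exact h1

lemma isAssouadBound_mono {F : Set X} {α β : ℝ} (h : IsAssouadBound F α) (hle : α ≤ β) :
    IsAssouadBound F β := by
  obtain ⟨hα, C, hC, hbound⟩ := h
  refine ⟨hα.trans hle, C, hC, fun x hx r R hr hrR => ?_⟩
  refine (hbound x hx r R hr hrR).trans ?_
  have h1 : (1:ℝ) ≤ R / r := (one_le_div hr).2 hrR.le
  exact mul_le_mul_of_nonneg_left (Real.rpow_le_rpow_of_exponent_le h1 hle) hC.le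

lemma exists_assouadBound_lt {F : Set X} (hAfin : ∃ α, IsAssouadBound F α) {β : ℝ}
    (hβ : assouadDim F < β) : IsAssouadBound F β := by
  obtain ⟨γ, hγS, hγβ⟩ := exists_lt_of_csInf_lt hAfin hβ
  exact isAssouadBound_mono hγS hγβ.le

lemma assouadDim_nonneg {F : Set X} (hAfin : ∃ α, IsAssouadBound F α) : 0 ≤ assouadDim F :=
  le_csInf hAfin (fun _ hb => hb.1)

lemma bounded_univ_of_assouad {F : Set X} (hAfin : ∃ α, IsAssouadBound F α)
    (hApos : 0 < assouadDim F) : IsBounded (Set.univ : Set X) := by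
  by_contra hunb
  have hb0 : IsAssouadBound F 0 := by
    refine ⟨le_refl 0, 1, one_pos, fun x hx r R hr hrR => ?_⟩
    have hcov : coverNum (Metric.ball x R ∩ F) r ≤ Fintype.card (Fin 1) :=
      coverNum_le_of_cover (fun _ => Set.univ) (by intro z hz; exact mem_iUnion.2 ⟨0, trivial⟩)
        (fun _ => by rw [Metric.diam_eq_zero_of_unbounded hunb]; exact hr.le)
    have : (coverNum (Metric.ball x R ∩ F) r : ℝ) ≤ 1 := by
      simpa using (Nat.cast_le (α := ℝ)).2 hcov
    simpa [Real.rpow_zero] using this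
  have : assouadDim F ≤ 0 := csInf_le ⟨0, fun a ha => ha.1⟩ hb0
  linarith

lemma exists_R0 [Nontrivial X] :
    ∃ R₀ : ℝ, 0 < R₀ ∧ ∀ R : ℝ, 0 < R → R < R₀ →
      ENNReal.ofReal R < EMetric.diam (Set.univ : Set X) := by
  obtain ⟨x, y, hxy⟩ := exists_pair_ne X
  have hpos : 0 < EMetric.diam (Set.univ : Set X) :=
    lt_of_lt_of_le (by simpa [edist_pos] using hxy) (EMetric.edist_le_diam_of_mem trivial trivial)
  rcases eq_or_ne (EMetric.diam (Set.univ : Set X)) ⊤ with htop | hne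
  · exact ⟨1, one_pos, fun R hR hR1 => by rw [htop]; exact ENNReal.ofReal_lt_top⟩
  · refine ⟨(EMetric.diam (Set.univ : Set X)).toReal, ENNReal.toReal_pos hpos.ne' hne, ?_⟩
    intro R hR hRlt
    calc ENNReal.ofReal R < ENNReal.ofReal ((EMetric.diam (Set.univ : Set X)).toReal) :=
          (ENNReal.ofReal_lt_ofReal_iff (ENNReal.toReal_pos hpos.ne' hne)).2 hRlt
      _ = EMetric.diam (Set.univ : Set X) := ENNReal.ofReal_toReal hne

lemma fatten {c : ℝ} (hc0 : 0 < c)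
    (hprop : ∀ (x : X) (R : ℝ), 0 < R → ENNReal.ofReal R < EMetric.diam (Set.univ : Set X) →
      ∃ y : X, dist x y < R ∧ c * R ≤ dist x y)
    {U : Set X} {x : X} {R : ℝ} (hx : x ∈ U) (hbd : IsBounded U) (hR : 0 < R)
    (hRd : ENNReal.ofReal R < EMetric.diam (Set.univ : Set X)) :
    ∃ V : Set X, U ⊆ V ∧ IsBounded V ∧ c * R ≤ Metric.diam V ∧
      Metric.diam V ≤ Metric.diam U + R := by
  obtain ⟨y, hy1, hy2⟩ := hprop x R hR hRd
  refine ⟨U ∪ {y}, subset_union_left, hbd.union (Bornology.isBounded_singleton), ?_, ?_⟩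
  · calc c * R ≤ dist x y := hy2
      _ ≤ Metric.diam (U ∪ {y}) :=
        Metric.dist_le_diam_of_mem (hbd.union Bornology.isBounded_singleton)
          (Or.inl hx) (Or.inr rfl)
  · calc Metric.diam (U ∪ {y}) ≤ Metric.diam U + dist x y + Metric.diam ({y} : Set X) :=
        Metric.diam_union hx rfl
      _ ≤ Metric.diam U + R + 0 := by
          have h1 : dist x y ≤ R := hy1.le
          have h2 : Metric.diam ({y} : Set X) = 0 := Metric.diam_singleton
          linarith
      _ = Metric.diam U + R := by ring

end Aux

section Aux2

open Bornology

variable {X : Type*} [MetricSpace X]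

/-- Per-set construction for the φ-target transfer. -/
lemma perSet {F : Set X} (hTB : TotallyBounded F) (hbd : IsBounded (Set.univ : Set X))
    {c : ℝ} (hc0 : 0 < c)
    (hprop : ∀ (x : X) (R : ℝ), 0 < R → ENNReal.ofReal R < EMetric.diam (Set.univ : Set X) →
      ∃ y : X, dist x y < R ∧ c * R ≤ dist x y)
    {R₀ : ℝ} (hR0 : ∀ R : ℝ, 0 < R → R < R₀ →
      ENNReal.ofReal R < EMetric.diam (Set.univ : Set X))
    {α C : ℝ} (hC : 0 < C)
    (hA : ∀ x ∈ F, ∀ r R : ℝ, 0 < r → r < R →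
      (coverNum (Metric.ball x R ∩ F) r : ℝ) ≤ C * (R / r) ^ α)
    {s t a b γ δ : ℝ}
    (hs : 0 ≤ s) (hsα : s ≤ α) (ha0 : 0 < a) (hb0 : 0 < b)
    (hγ0 : 0 < γ) (hδ0 : 0 < δ) (hδ1 : δ ≤ 1) (hst : s ≤ t)
    (h1 : γ * s / a ≤ t / b) (h2 : α ≤ t + γ * (α - s))
    (hsmall : (1 + 1/c) * δ ^ ((1:ℝ)/b) ≤ δ/2)
    (hR0small : δ ^ ((1:ℝ)/b) / c < R₀)
    (U : Set X) (hd1 : δ ^ (γ/a) ≤ Metric.diam U) (hd2 : Metric.diam U ≤ δ ^ γ) :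
    ∃ (m : ℕ) (V : Fin m → Set X),
      (U ∩ F ⊆ ⋃ j, V j) ∧
      (∀ j, δ ^ ((1:ℝ)/b) ≤ Metric.diam (V j) ∧ Metric.diam (V j) ≤ δ) ∧
      ∑ j, Metric.diam (V j) ^ t ≤ (1 + (1 + 1/c) ^ t + C * 4 ^ α) * Metric.diam U ^ s := by
  have ht0 : 0 ≤ t := hs.trans hst
  set d := Metric.diam U with hd
  have dpos : 0 < d := lt_of_lt_of_le (Real.rpow_pos_of_pos hδ0 _) hd1
  have hUne : U.Nonempty := by
    rcases U.eq_empty_or_nonempty with h | h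
    · rw [h] at hd; simp [Metric.diam_empty] at hd; rw [hd] at dpos; linarith
    · exact h
  obtain ⟨x₀, hx₀⟩ := hUne
  have hUbd : IsBounded U := hbd.subset (subset_univ U)
  set m₀ := δ ^ ((1:ℝ)/b) with hm₀
  have m₀pos : 0 < m₀ := Real.rpow_pos_of_pos hδ0 _
  have hcinv : 0 < 1/c := by positivity
  set R := m₀ / c with hR
  have Rpos : 0 < R := by positivity
  have hcR : c * R = m₀ := by rw [hR]; field_simp
  have hexp : (1 + 1/c) * m₀ = m₀ + m₀ / c := by ring
  have hmc : 0 ≤ m₀ / c := by positivity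
  have hRle2 : R ≤ δ/2 := by
    have : m₀ / c ≤ (1 + 1/c) * m₀ := by rw [hexp]; linarith [m₀pos.le]
    linarith
  have hm₀δ : m₀ ≤ δ := by
    have : m₀ ≤ (1 + 1/c) * m₀ := by rw [hexp]; linarith
    linarith
  have hofReal : ENNReal.ofReal R < EMetric.diam (Set.univ : Set X) :=
    hR0 R Rpos (lt_of_le_of_lt (le_refl R) hR0small)
  have hδγ1 : δ ^ γ ≤ 1 := Real.rpow_le_one hδ0.le hδ1 hγ0.le
  have hd1' : d ≤ 1 := hd2.trans hδγ1
  have coeff_ge : ∀ x : ℝ, 0 ≤ x → x ≤ 1 ∨ x ≤ (1 + 1/c)^t ∨ x ≤ C * 4^α →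
      x * d ^ s ≤ (1 + (1 + 1/c) ^ t + C * 4 ^ α) * d ^ s := by
    intro x hx hcase
    have h4 : (0:ℝ) ≤ C * 4 ^ α := by positivity
    have h5 : (0:ℝ) ≤ (1 + 1/c)^t := Real.rpow_nonneg (by positivity) _
    have hds : (0:ℝ) ≤ d ^ s := Real.rpow_nonneg dpos.le _
    have hx' : x ≤ 1 + (1 + 1/c) ^ t + C * 4 ^ α := by
      rcases hcase with h | h | h <;> linarith
    exact mul_le_mul_of_nonneg_right hx' hds
  -- key estimate used in the "fatten" case
  have key_fatten : ((1 + 1/c) * m₀) ^ t ≤ (1 + 1/c)^t * d ^ s := by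
    have e1 : ((1 + 1/c) * m₀) ^ t = (1 + 1/c)^t * m₀ ^ t :=
      Real.mul_rpow (by positivity) m₀pos.le
    have e2 : m₀ ^ t = δ ^ (t/b) := by
      rw [hm₀, ← Real.rpow_mul hδ0.le]
      congr 1
      ring
    have e3 : δ ^ (t/b) ≤ δ ^ (γ * s / a) :=
      Real.rpow_le_rpow_of_exponent_ge hδ0 hδ1 h1
    have e4 : δ ^ (γ * s / a) ≤ d ^ s := by
      have : δ ^ (γ * s / a) = (δ ^ (γ/a)) ^ s := by
        rw [← Real.rpow_mul hδ0.le]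
        ring_nf
      rw [this]
      exact Real.rpow_le_rpow (Real.rpow_nonneg hδ0.le _) hd1 hs
    calc ((1 + 1/c) * m₀) ^ t = (1 + 1/c)^t * m₀ ^ t := e1
      _ ≤ (1 + 1/c)^t * d ^ s := by
          have h5 : (0:ℝ) ≤ (1 + 1/c)^t := Real.rpow_nonneg (by positivity) _
          have h7 : m₀ ^ t ≤ d ^ s := by rw [e2]; exact e3.trans e4
          exact mul_le_mul_of_nonneg_left h7 h5
  by_cases hbig : d ≤ δ/2
  · by_cases hsm : d < m₀
    · -- small: fatten U
      obtain ⟨V₀, hV₀U, hV₀bd, hV₀low, hV₀hi⟩ := fatten hc0 hprop hx₀ hUbd Rpos hofReal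
      refine ⟨1, fun _ => V₀, ?_, ?_, ?_⟩
      · intro z hz; exact mem_iUnion.2 ⟨0, hV₀U hz.1⟩
      · intro j
        constructor
        · rw [hm₀] at hcR; linarith
        · have h7 : Metric.diam V₀ ≤ d + R := hV₀hi
          have h6 : d + R ≤ m₀ + m₀ / c := by linarith [hsm.le]
          linarith
      · rw [Fin.sum_univ_one]
        have hV₀le : Metric.diam V₀ ≤ (1 + 1/c) * m₀ := by
          have h6 : d + R ≤ m₀ + m₀ / c := by linarith [hsm.le]
          linarith [hV₀hi]
        have : Metric.diam V₀ ^ t ≤ ((1 + 1/c) * m₀) ^ t :=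
          Real.rpow_le_rpow Metric.diam_nonneg hV₀le ht0
        refine le_trans (this.trans key_fatten) ?_
        exact coeff_ge _ (Real.rpow_nonneg (by positivity) _) (Or.inr (Or.inl le_rfl))
    · -- medium: keep U
      push_neg at hsm
      refine ⟨1, fun _ => U, ?_, ?_, ?_⟩
      · intro z hz; exact mem_iUnion.2 ⟨0, hz.1⟩
      · exact fun j => ⟨hsm, by linarith⟩
      · rw [Fin.sum_univ_one]
        have : d ^ t ≤ d ^ s := Real.rpow_le_rpow_of_exponent_ge dpos hd1' hst
        refine le_trans this ?_
        calc d ^ s = 1 * d ^ s := (one_mul _).symm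
          _ ≤ _ := coeff_ge 1 zero_le_one (Or.inl le_rfl)
  · -- big: subdivide then fatten pieces
    push_neg at hbig
    rcases (U ∩ F).eq_empty_or_nonempty with hUF | hUF
    · refine ⟨0, (fun j : Fin 0 => (∅ : Set X)), by rw [hUF]; simp, fun j => Fin.elim0 j, ?_⟩
      have hz : ∑ j : Fin 0, Metric.diam ((fun _ : Fin 0 => (∅ : Set X)) j) ^ t = 0 := by simp
      rw [hz]
      positivity
    obtain ⟨x₁, hx₁⟩ := hUF
    have hrR : δ/2 < 2 * d := by linarith
    set N := coverNum (Metric.ball x₁ (2*d) ∩ F) (δ/2) with hN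
    have hNle : (N:ℝ) ≤ C * ((2*d)/(δ/2)) ^ α := hA x₁ hx₁.2 (δ/2) (2*d) (by linarith) hrR
    have hTBsub : TotallyBounded (Metric.ball x₁ (2*d) ∩ F) :=
      hTB.subset inter_subset_right
    obtain ⟨W, hWcov, hWdiam⟩ := coverNum_spec hTBsub (show (0:ℝ) < δ/2 by linarith)
    have claim : ∀ j : Fin N, ∃ Vj : Set X,
        (W j ∩ (U ∩ F) ⊆ Vj) ∧ m₀ ≤ Metric.diam Vj ∧ Metric.diam Vj ≤ δ := by
      intro j
      rcases (W j ∩ (U ∩ F)).eq_empty_or_nonempty with hWj | ⟨z, hz⟩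
      · obtain ⟨Vj, hV1, hV2, hV3, hV4⟩ := fatten hc0 hprop (mem_singleton x₁)
          (hbd.subset (subset_univ _)) Rpos hofReal
        refine ⟨Vj, by rw [hWj]; exact empty_subset _, by rw [← hcR]; exact hV3, ?_⟩
        have h8 : Metric.diam ({x₁} : Set X) = 0 := Metric.diam_singleton
        rw [h8] at hV4
        linarith [hV4, hRle2]
      · obtain ⟨Vj, hV1, hV2, hV3, hV4⟩ := fatten hc0 hprop hz
          (hbd.subset (subset_univ _)) Rpos hofReal
        refine ⟨Vj, hV1, by rw [← hcR]; exact hV3, ?_⟩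
        have hsub : Metric.diam (W j ∩ (U ∩ F)) ≤ δ/2 :=
          le_trans (Metric.diam_mono inter_subset_left (hbd.subset (subset_univ _))) (hWdiam j)
        linarith [hV4, hRle2]
    choose Vf hVf1 hVf2 hVf3 using claim
    refine ⟨N, Vf, ?_, fun j => ⟨hVf2 j, hVf3 j⟩, ?_⟩
    · intro z hz
      have hzb : z ∈ Metric.ball x₁ (2*d) ∩ F := by
        refine ⟨?_, hz.2⟩
        have : dist z x₁ ≤ d := Metric.dist_le_diam_of_mem hUbd hz.1 hx₁.1
        exact Metric.mem_ball.2 (lt_of_le_of_lt this (by linarith))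
      obtain ⟨j, hj⟩ := mem_iUnion.1 (hWcov hzb)
      exact mem_iUnion.2 ⟨j, hVf1 j ⟨hj, hz⟩⟩
    · have each : ∀ j : Fin N, Metric.diam (Vf j) ^ t ≤ δ ^ t := fun j =>
        Real.rpow_le_rpow Metric.diam_nonneg (hVf3 j) ht0
      have hsum1 : ∑ j, Metric.diam (Vf j) ^ t ≤ (N:ℝ) * δ ^ t := by
        calc ∑ j, Metric.diam (Vf j) ^ t ≤ ∑ _j : Fin N, δ ^ t := Finset.sum_le_sum (fun j _ => each j)
          _ = (N:ℝ) * δ ^ t := by rw [Finset.sum_const, Finset.card_univ, Fintype.card_fin,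
              nsmul_eq_mul]
      refine hsum1.trans ?_
      have e0 : ((2*d)/(δ/2)) = 4 * d / δ := by field_simp; ring
      have e1 : (4 * d / δ) ^ α = 4 ^ α * d ^ α / δ ^ α := by
        rw [Real.div_rpow (by positivity) hδ0.le, Real.mul_rpow (by norm_num) dpos.le]
      have e2 : d ^ α = d ^ s * d ^ (α - s) := by
        rw [← Real.rpow_add dpos]; ring_nf
      have e3 : d ^ (α - s) ≤ δ ^ (γ * (α - s)) := by
        calc d ^ (α - s) ≤ (δ ^ γ) ^ (α - s) :=
              Real.rpow_le_rpow dpos.le hd2 (by linarith)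
          _ = δ ^ (γ * (α - s)) := by rw [← Real.rpow_mul hδ0.le]
      have e4 : δ ^ (γ * (α - s)) * δ ^ t / δ ^ α = δ ^ (γ * (α - s) + t - α) := by
        rw [← Real.rpow_add hδ0, ← Real.rpow_sub hδ0]
      have e5 : δ ^ (γ * (α - s) + t - α) ≤ 1 :=
        Real.rpow_le_one hδ0.le hδ1 (by linarith)
      have hδαpos : (0:ℝ) < δ ^ α := Real.rpow_pos_of_pos hδ0 _
      have hδtpos : (0:ℝ) < δ ^ t := Real.rpow_pos_of_pos hδ0 _
      have h4αpos : (0:ℝ) < 4 ^ α := Real.rpow_pos_of_pos (by norm_num) _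
      have hdspos : (0:ℝ) < d ^ s := Real.rpow_pos_of_pos dpos _
      have main : (N:ℝ) * δ ^ t ≤ C * 4 ^ α * d ^ s := by
        have hN2 : (N:ℝ) ≤ C * (4 ^ α * d ^ α / δ ^ α) := by
          rw [← e1, ← e0]; exact hNle
        have step : (N:ℝ) * δ ^ t ≤ C * (4 ^ α * d ^ α / δ ^ α) * δ ^ t :=
          mul_le_mul_of_nonneg_right hN2 hδtpos.le
        refine step.trans ?_
        rw [e2]
        have expand : C * (4 ^ α * (d ^ s * d ^ (α - s)) / δ ^ α) * δ ^ t
            = C * 4 ^ α * d ^ s * (d ^ (α - s) * δ ^ t / δ ^ α) := by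
          field_simp
          try ring
        rw [expand]
        have inner : d ^ (α - s) * δ ^ t / δ ^ α ≤ 1 := by
          have hstep : d ^ (α - s) * δ ^ t / δ ^ α ≤ δ ^ (γ * (α - s)) * δ ^ t / δ ^ α := by
            gcongr
          rw [e4] at hstep
          exact hstep.trans e5
        have hfin := mul_le_mul_of_nonneg_left inner
          (by positivity : (0:ℝ) ≤ C * 4 ^ α * d ^ s)
        rw [mul_one] at hfin
        exact hfin
      refine main.trans ?_
      exact coeff_ge _ (by positivity) (Or.inr (Or.inr le_rfl))

end Aux2

section Aux3

open Bornology

variable {X : Type*} [MetricSpace X]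

/-- Per-set construction for the box-target transfer (no lower diameter bound needed). -/
lemma perSetBox {F : Set X} (hTB : TotallyBounded F) (hbd : IsBounded (Set.univ : Set X))
    {α C : ℝ} (hC : 0 < C)
    (hA : ∀ x ∈ F, ∀ r R : ℝ, 0 < r → r < R →
      (coverNum (Metric.ball x R ∩ F) r : ℝ) ≤ C * (R / r) ^ α)
    {s a γ δ w : ℝ}
    (hs : 0 ≤ s) (hsα : s ≤ α) (ha0 : 0 < a)
    (hγ0 : 0 < γ) (hδ0 : 0 < δ) (hδ1 : δ ≤ 1)
    (hw1 : γ * s / a ≤ w) (hw2 : α - γ * (α - s) ≤ w)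
    (U : Set X) (hd1 : δ ^ (γ/a) ≤ Metric.diam U) (hd2 : Metric.diam U ≤ δ ^ γ) :
    ∃ (m : ℕ) (V : Fin m → Set X),
      (U ∩ F ⊆ ⋃ j, V j) ∧ (∀ j, Metric.diam (V j) ≤ δ) ∧
      (m : ℝ) ≤ (1 + C * 2 ^ α) * Metric.diam U ^ s * δ ^ (-w) := by
  set d := Metric.diam U with hd
  have dpos : 0 < d := lt_of_lt_of_le (Real.rpow_pos_of_pos hδ0 _) hd1
  have hUbd : IsBounded U := hbd.subset (subset_univ U)
  have hdspos : (0:ℝ) < d ^ s := Real.rpow_pos_of_pos dpos _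
  have hδwpos : (0:ℝ) < δ ^ (-w) := Real.rpow_pos_of_pos hδ0 _
  have h2αpos : (0:ℝ) < (2:ℝ) ^ α := Real.rpow_pos_of_pos (by norm_num) _
  have hcoeff1 : (1:ℝ) ≤ 1 + C * 2 ^ α := by nlinarith
  have base_ge : (1:ℝ) ≤ δ ^ (γ * s / a) * δ ^ (-w) := by
    have he : δ ^ (γ * s / a) * δ ^ (-w) = δ ^ (γ * s / a - w) := by
      rw [← Real.rpow_add hδ0]; ring_nf
    rw [he]
    exact Real.one_le_rpow_of_pos_of_le_one_of_nonpos hδ0 hδ1 (by linarith)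
  have hds_ge : δ ^ (γ * s / a) ≤ d ^ s := by
    have : δ ^ (γ * s / a) = (δ ^ (γ/a)) ^ s := by
      rw [← Real.rpow_mul hδ0.le]; ring_nf
    rw [this]
    exact Real.rpow_le_rpow (Real.rpow_nonneg hδ0.le _) hd1 hs
  by_cases hbig : d ≤ δ
  · refine ⟨1, fun _ => U, fun z hz => mem_iUnion.2 ⟨0, hz.1⟩, fun _ => by
      rw [← hd]; exact hbig, ?_⟩
    push_cast
    calc (1:ℝ) ≤ δ ^ (γ * s / a) * δ ^ (-w) := base_ge
      _ ≤ d ^ s * δ ^ (-w) := mul_le_mul_of_nonneg_right hds_ge hδwpos.le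
      _ ≤ (1 + C * 2 ^ α) * d ^ s * δ ^ (-w) := by
          nlinarith [mul_nonneg (mul_pos hC h2αpos).le (mul_pos hdspos hδwpos).le]
  · push_neg at hbig
    rcases (U ∩ F).eq_empty_or_nonempty with hUF | hUF
    · refine ⟨0, (fun _ : Fin 0 => (∅ : Set X)), by rw [hUF]; simp,
        fun j => Fin.elim0 j, ?_⟩
      push_cast
      positivity
    obtain ⟨x₁, hx₁⟩ := hUF
    have hrR : δ < 2 * d := by linarith
    set N := coverNum (Metric.ball x₁ (2*d) ∩ F) δ with hN
    have hNle : (N:ℝ) ≤ C * ((2*d)/δ) ^ α := hA x₁ hx₁.2 δ (2*d) hδ0 hrR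
    have hTBsub : TotallyBounded (Metric.ball x₁ (2*d) ∩ F) := hTB.subset inter_subset_right
    obtain ⟨W, hWcov, hWdiam⟩ := coverNum_spec hTBsub hδ0
    refine ⟨N, W, ?_, hWdiam, ?_⟩
    · intro z hz
      have : dist z x₁ ≤ d := Metric.dist_le_diam_of_mem hUbd hz.1 hx₁.1
      exact hWcov ⟨Metric.mem_ball.2 (lt_of_le_of_lt this (by linarith)), hz.2⟩
    · have e1 : ((2*d)/δ) ^ α = 2 ^ α * d ^ α / δ ^ α := by
        rw [Real.div_rpow (by positivity) hδ0.le, Real.mul_rpow (by norm_num) dpos.le]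
      have e2 : d ^ α = d ^ s * d ^ (α - s) := by rw [← Real.rpow_add dpos]; ring_nf
      have e3 : d ^ (α - s) ≤ δ ^ (γ * (α - s)) := by
        calc d ^ (α - s) ≤ (δ ^ γ) ^ (α - s) := Real.rpow_le_rpow dpos.le hd2 (by linarith)
          _ = δ ^ (γ * (α - s)) := by rw [← Real.rpow_mul hδ0.le]
      have e4 : δ ^ (γ * (α - s)) / δ ^ α ≤ δ ^ (-w) := by
        have he : δ ^ (γ * (α - s)) / δ ^ α = δ ^ (γ * (α - s) - α) := by
          rw [← Real.rpow_sub hδ0]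
        rw [he]
        exact Real.rpow_le_rpow_of_exponent_ge hδ0 hδ1 (by linarith)
      have hδαpos : (0:ℝ) < δ ^ α := Real.rpow_pos_of_pos hδ0 _
      calc (N:ℝ) ≤ C * ((2*d)/δ) ^ α := hNle
        _ = C * 2 ^ α * (d ^ s * (d ^ (α - s) / δ ^ α)) := by
            rw [e1, e2]; field_simp
        _ ≤ C * 2 ^ α * (d ^ s * (δ ^ (γ * (α - s)) / δ ^ α)) := by
            have h9 : d ^ (α - s) / δ ^ α ≤ δ ^ (γ * (α - s)) / δ ^ α := by gcongr
            have h10 : d ^ s * (d ^ (α - s) / δ ^ α) ≤ d ^ s * (δ ^ (γ * (α - s)) / δ ^ α) :=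
              mul_le_mul_of_nonneg_left h9 hdspos.le
            exact mul_le_mul_of_nonneg_left h10 (by positivity)
        _ ≤ C * 2 ^ α * (d ^ s * δ ^ (-w)) := by
            have h10 : d ^ s * (δ ^ (γ * (α - s)) / δ ^ α) ≤ d ^ s * δ ^ (-w) :=
              mul_le_mul_of_nonneg_left e4 hdspos.le
            exact mul_le_mul_of_nonneg_left h10 (by positivity)
        _ ≤ (1 + C * 2 ^ α) * d ^ s * δ ^ (-w) := by nlinarith
end Aux3

section Aux4

open Bornology

variable {X : Type*} [MetricSpace X]

/-- Core transfer: an `a`-cover at scale `δ^γ` yields a `b`-cover at scale `δ`. -/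
lemma core_transfer {F : Set X} (hTB : TotallyBounded F) (hbd : IsBounded (Set.univ : Set X))
    {c : ℝ} (hc0 : 0 < c)
    (hprop : ∀ (x : X) (R : ℝ), 0 < R → ENNReal.ofReal R < EMetric.diam (Set.univ : Set X) →
      ∃ y : X, dist x y < R ∧ c * R ≤ dist x y)
    {R₀ : ℝ} (hR0 : ∀ R : ℝ, 0 < R → R < R₀ →
      ENNReal.ofReal R < EMetric.diam (Set.univ : Set X))
    {α C : ℝ} (hC : 0 < C)
    (hA : ∀ x ∈ F, ∀ r R : ℝ, 0 < r → r < R →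
      (coverNum (Metric.ball x R ∩ F) r : ℝ) ≤ C * (R / r) ^ α)
    {s t a b γ δ ε' : ℝ}
    (hs : 0 ≤ s) (hsα : s ≤ α) (ha0 : 0 < a) (hb0 : 0 < b)
    (hγ0 : 0 < γ) (hδ0 : 0 < δ) (hδ1 : δ ≤ 1) (hst : s ≤ t)
    (h1 : γ * s / a ≤ t / b) (h2 : α ≤ t + γ * (α - s))
    (hsmall : (1 + 1/c) * δ ^ ((1:ℝ)/b) ≤ δ/2)
    (hR0small : δ ^ ((1:ℝ)/b) / c < R₀)
    (hsrc : CoverSum (fun x => x ^ ((1:ℝ)/a)) s ε' (δ^γ) F) :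
    CoverSum (fun x => x ^ ((1:ℝ)/b)) t ((1 + (1 + 1/c) ^ t + C * 4 ^ α) * ε') δ F := by
  obtain ⟨n, U, hcov, hdiam, hsum⟩ := hsrc
  have hdiam' : ∀ i, δ ^ (γ/a) ≤ Metric.diam (U i) ∧ Metric.diam (U i) ≤ δ ^ γ := by
    intro i
    have h := hdiam i
    have he : (δ^γ) ^ ((1:ℝ)/a) = δ ^ (γ/a) := by
      rw [← Real.rpow_mul hδ0.le]; ring_nf
    exact ⟨by rw [← he]; exact h.1, h.2⟩
  have claim : ∀ i : Fin n, ∃ (m : ℕ) (V : Fin m → Set X),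
      (U i ∩ F ⊆ ⋃ j, V j) ∧
      (∀ j, δ ^ ((1:ℝ)/b) ≤ Metric.diam (V j) ∧ Metric.diam (V j) ≤ δ) ∧
      ∑ j, Metric.diam (V j) ^ t ≤ (1 + (1 + 1/c) ^ t + C * 4 ^ α) * Metric.diam (U i) ^ s :=
    fun i => perSet hTB hbd hc0 hprop hR0 hC hA hs hsα ha0 hb0 hγ0 hδ0 hδ1 hst h1 h2
      hsmall hR0small (U i) (hdiam' i).1 (hdiam' i).2
  choose m V hVcov hVd hVsum using claim
  refine coverSum_of_fintype (ι := (i : Fin n) × Fin (m i)) (fun p => V p.1 p.2) ?_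
    (fun p => hVd p.1 p.2) ?_
  · intro x hx
    obtain ⟨i, hi⟩ := mem_iUnion.1 (hcov hx)
    obtain ⟨j, hj⟩ := mem_iUnion.1 (hVcov i ⟨hi, hx⟩)
    exact mem_iUnion.2 ⟨⟨i, j⟩, hj⟩
  · have e : ∑ p : (i : Fin n) × Fin (m i), Metric.diam (V p.1 p.2) ^ t
        = ∑ i : Fin n, ∑ j : Fin (m i), Metric.diam (V i j) ^ t := by
      rw [← Finset.univ_sigma_univ, Finset.sum_sigma]
    rw [e]
    calc ∑ i : Fin n, ∑ j : Fin (m i), Metric.diam (V i j) ^ t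
        ≤ ∑ i : Fin n, (1 + (1 + 1/c) ^ t + C * 4 ^ α) * Metric.diam (U i) ^ s :=
          Finset.sum_le_sum (fun i _ => hVsum i)
      _ = (1 + (1 + 1/c) ^ t + C * 4 ^ α) * ∑ i : Fin n, Metric.diam (U i) ^ s := by
          rw [Finset.mul_sum]
      _ ≤ (1 + (1 + 1/c) ^ t + C * 4 ^ α) * ε' := by
          have hco : (0:ℝ) ≤ 1 + (1 + 1/c) ^ t + C * 4 ^ α := by
            have := Real.rpow_nonneg (show (0:ℝ) ≤ 1 + 1/c by positivity) t
            have := Real.rpow_nonneg (show (0:ℝ) ≤ 4 by norm_num) α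
            positivity
          exact mul_le_mul_of_nonneg_left hsum hco

/-- Core transfer to covering numbers. -/
lemma core_box {F : Set X} (hTB : TotallyBounded F) (hbd : IsBounded (Set.univ : Set X))
    {α C : ℝ} (hC : 0 < C)
    (hA : ∀ x ∈ F, ∀ r R : ℝ, 0 < r → r < R →
      (coverNum (Metric.ball x R ∩ F) r : ℝ) ≤ C * (R / r) ^ α)
    {s a γ δ w ε' : ℝ}
    (hs : 0 ≤ s) (hsα : s ≤ α) (ha0 : 0 < a)
    (hγ0 : 0 < γ) (hδ0 : 0 < δ) (hδ1 : δ ≤ 1)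
    (hw1 : γ * s / a ≤ w) (hw2 : α - γ * (α - s) ≤ w)
    (hsrc : CoverSum (fun x => x ^ ((1:ℝ)/a)) s ε' (δ^γ) F) :
    (coverNum F δ : ℝ) ≤ (1 + C * 2 ^ α) * ε' * δ ^ (-w) := by
  obtain ⟨n, U, hcov, hdiam, hsum⟩ := hsrc
  have hdiam' : ∀ i, δ ^ (γ/a) ≤ Metric.diam (U i) ∧ Metric.diam (U i) ≤ δ ^ γ := by
    intro i
    have h := hdiam i
    have he : (δ^γ) ^ ((1:ℝ)/a) = δ ^ (γ/a) := by
      rw [← Real.rpow_mul hδ0.le]; ring_nf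
    exact ⟨by rw [← he]; exact h.1, h.2⟩
  have claim : ∀ i : Fin n, ∃ (m : ℕ) (V : Fin m → Set X),
      (U i ∩ F ⊆ ⋃ j, V j) ∧ (∀ j, Metric.diam (V j) ≤ δ) ∧
      (m : ℝ) ≤ (1 + C * 2 ^ α) * Metric.diam (U i) ^ s * δ ^ (-w) :=
    fun i => perSetBox hTB hbd hC hA hs hsα ha0 hγ0 hδ0 hδ1 hw1 hw2
      (U i) (hdiam' i).1 (hdiam' i).2
  choose m V hVcov hVd hVm using claim
  have hcover : coverNum F δ ≤ Fintype.card ((i : Fin n) × Fin (m i)) := by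
    refine coverNum_le_of_cover (fun p => V p.1 p.2) ?_ (fun p => hVd p.1 p.2)
    intro x hx
    obtain ⟨i, hi⟩ := mem_iUnion.1 (hcov hx)
    obtain ⟨j, hj⟩ := mem_iUnion.1 (hVcov i ⟨hi, hx⟩)
    exact mem_iUnion.2 ⟨⟨i, j⟩, hj⟩
  have hcard : (Fintype.card ((i : Fin n) × Fin (m i)) : ℝ) = ∑ i : Fin n, (m i : ℝ) := by
    rw [Fintype.card_sigma]
    push_cast
    simp
  calc (coverNum F δ : ℝ) ≤ (Fintype.card ((i : Fin n) × Fin (m i)) : ℝ) := by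
        exact_mod_cast hcover
    _ = ∑ i : Fin n, (m i : ℝ) := hcard
    _ ≤ ∑ i : Fin n, (1 + C * 2 ^ α) * Metric.diam (U i) ^ s * δ ^ (-w) :=
        Finset.sum_le_sum (fun i _ => hVm i)
    _ = (1 + C * 2 ^ α) * (∑ i : Fin n, Metric.diam (U i) ^ s) * δ ^ (-w) := by
        rw [Finset.mul_sum, Finset.sum_mul]
    _ ≤ (1 + C * 2 ^ α) * ε' * δ ^ (-w) := by
        have h2αpos : (0:ℝ) < (2:ℝ) ^ α := Real.rpow_pos_of_pos (by norm_num) _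
        have hδwpos : (0:ℝ) < δ ^ (-w) := Real.rpow_pos_of_pos hδ0 _
        have hco : (0:ℝ) ≤ 1 + C * 2 ^ α := by nlinarith
        have := mul_le_mul_of_nonneg_left hsum hco
        nlinarith

end Aux4

section Aux5

open Bornology

variable {X : Type*} [MetricSpace X]

lemma rpow_tendsto_zero {p : ℝ} (hp : 0 < p) :
    Filter.Tendsto (fun δ : ℝ => δ ^ p) (nhdsWithin 0 (Set.Ioi 0)) (nhds 0) := by
  have hc : ContinuousAt (fun x : ℝ => x ^ p) 0 :=
    Real.continuousAt_rpow_const 0 p (Or.inr hp.le)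
  have h0 : (0:ℝ) ^ p = 0 := Real.zero_rpow hp.ne'
  have h := hc.tendsto
  rw [h0] at h
  exact h.mono_left nhdsWithin_le_nhds

lemma eventually_rpow_lt {p K : ℝ} (hp : 0 < p) (hK : 0 < K) :
    ∀ᶠ δ in nhdsWithin (0:ℝ) (Set.Ioi 0), δ ^ p < K :=
  (rpow_tendsto_zero hp).eventually_lt_const hK

lemma exists_Ioo_of_eventually {P : ℝ → Prop}
    (h : ∀ᶠ δ in nhdsWithin (0:ℝ) (Set.Ioi 0), P δ) :
    ∃ u : ℝ, 0 < u ∧ ∀ δ : ℝ, 0 < δ → δ < u → P δ := by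
  rw [Filter.eventually_iff, mem_nhdsGT_iff_exists_Ioo_subset] at h
  obtain ⟨u, hu, hsub⟩ := h
  exact ⟨u, hu, fun δ h1 h2 => hsub ⟨h1, h2⟩⟩

lemma frequently_of_pointwise {P : ℝ → Prop}
    (h : ∀ u : ℝ, 0 < u → ∃ δ, 0 < δ ∧ δ < u ∧ P δ) :
    ∃ᶠ δ in nhdsWithin (0:ℝ) (Set.Ioi 0), P δ := by
  rw [Filter.frequently_iff]
  intro U hU
  obtain ⟨u, hu, hsub⟩ := mem_nhdsGT_iff_exists_Ioo_subset.1 hU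
  obtain ⟨δ, h1, h2, hP⟩ := h u hu
  exact ⟨δ, hsub ⟨h1, h2⟩, hP⟩

lemma eventually_mem_Ioo01 : ∀ᶠ δ in nhdsWithin (0:ℝ) (Set.Ioi 0), 0 < δ ∧ δ < 1 := by
  have : Set.Ioo (0:ℝ) 1 ∈ nhdsWithin (0:ℝ) (Set.Ioi 0) :=
    Ioo_mem_nhdsGT one_pos
  exact Filter.eventually_iff.2 (by simpa [Set.Ioo] using this)

lemma one_le_coverNum_real {F : Set X} (hne : F.Nonempty) (hTB : TotallyBounded F)
    {δ : ℝ} (hδ : 0 < δ) : (1:ℝ) ≤ (coverNum F δ : ℝ) := by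
  exact_mod_cast one_le_coverNum hne hTB hδ

lemma ratio_le_of_le {F : Set X} {δ t : ℝ} (hδ0 : 0 < δ) (hδ1 : δ < 1)
    (hN : (1:ℝ) ≤ (coverNum F δ : ℝ)) (h : (coverNum F δ : ℝ) ≤ δ ^ (-t)) :
    Real.log (coverNum F δ) / -Real.log δ ≤ t := by
  have hlogδ : Real.log δ < 0 := Real.log_neg hδ0 hδ1
  have hlog : Real.log (coverNum F δ) ≤ -t * Real.log δ := by
    calc Real.log (coverNum F δ) ≤ Real.log (δ ^ (-t)) :=
          Real.log_le_log (by linarith) h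
      _ = -t * Real.log δ := Real.log_rpow hδ0 _
  rw [div_le_iff₀ (by linarith : 0 < -Real.log δ)]
  linarith

lemma le_rpow_of_ratio_le {F : Set X} {δ t : ℝ} (hδ0 : 0 < δ) (hδ1 : δ < 1)
    (hN : (1:ℝ) ≤ (coverNum F δ : ℝ))
    (h : Real.log (coverNum F δ) / -Real.log δ ≤ t) :
    (coverNum F δ : ℝ) ≤ δ ^ (-t) := by
  have hlogδ : Real.log δ < 0 := Real.log_neg hδ0 hδ1
  have hlog : Real.log (coverNum F δ) ≤ -t * Real.log δ := by
    rw [div_le_iff₀ (by linarith : 0 < -Real.log δ)] at h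
    linarith
  have hNpos : (0:ℝ) < (coverNum F δ : ℝ) := by linarith
  calc (coverNum F δ : ℝ) = Real.exp (Real.log (coverNum F δ)) := (Real.exp_log hNpos).symm
    _ ≤ Real.exp (-t * Real.log δ) := Real.exp_le_exp.2 hlog
    _ = δ ^ (-t) := by rw [Real.rpow_def_of_pos hδ0]; ring_nf

lemma ratio_nonneg {F : Set X} (hne : F.Nonempty) (hTB : TotallyBounded F) :
    ∀ᶠ δ in nhdsWithin (0:ℝ) (Set.Ioi 0),
      0 ≤ Real.log (coverNum F δ) / -Real.log δ := by
  refine eventually_mem_Ioo01.mono (fun δ hδ => ?_)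
  have h1 : (1:ℝ) ≤ (coverNum F δ : ℝ) := one_le_coverNum_real hne hTB hδ.1
  have hlogδ : Real.log δ < 0 := Real.log_neg hδ.1 hδ.2
  exact div_nonneg (Real.log_nonneg h1) (by linarith)

lemma upperBoxDim_le_of_eventually {F : Set X} (hne : F.Nonempty) (hTB : TotallyBounded F)
    {t : ℝ} (h : ∀ᶠ δ in nhdsWithin (0:ℝ) (Set.Ioi 0), (coverNum F δ : ℝ) ≤ δ ^ (-t)) :
    upperBoxDim F ≤ t := by
  have hev : ∀ᶠ δ in nhdsWithin (0:ℝ) (Set.Ioi 0),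
      Real.log (coverNum F δ) / -Real.log δ ≤ t := by
    refine (h.and eventually_mem_Ioo01).mono (fun δ hδ => ?_)
    exact ratio_le_of_le hδ.2.1 hδ.2.2 (one_le_coverNum_real hne hTB hδ.2.1) hδ.1
  exact Filter.limsup_le_of_le
    (Filter.IsBoundedUnder.isCoboundedUnder_le
      ⟨0, Filter.eventually_map.2 (ratio_nonneg hne hTB)⟩) hev

lemma lowerBoxDim_le_of_frequently {F : Set X} (hne : F.Nonempty) (hTB : TotallyBounded F)
    {t : ℝ} (h : ∃ᶠ δ in nhdsWithin (0:ℝ) (Set.Ioi 0), (coverNum F δ : ℝ) ≤ δ ^ (-t)) :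
    lowerBoxDim F ≤ t := by
  have hfreq : ∃ᶠ δ in nhdsWithin (0:ℝ) (Set.Ioi 0),
      Real.log (coverNum F δ) / -Real.log δ ≤ t := by
    refine (h.and_eventually eventually_mem_Ioo01).mono (fun δ hδ => ?_)
    exact ratio_le_of_le hδ.2.1 hδ.2.2 (one_le_coverNum_real hne hTB hδ.2.1) hδ.1
  refine Filter.liminf_le_of_frequently_le hfreq ?_
  exact ⟨0, Filter.eventually_map.2 (ratio_nonneg hne hTB)⟩

lemma eventually_coverNum_le {F : Set X} (hne : F.Nonempty) (hTB : TotallyBounded F)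
    (hbd : IsBounded (Set.univ : Set X))
    {α C : ℝ} (hC : 0 < C) (hα : 0 ≤ α)
    (hA : ∀ x ∈ F, ∀ r R : ℝ, 0 < r → r < R →
      (coverNum (Metric.ball x R ∩ F) r : ℝ) ≤ C * (R / r) ^ α)
    {t : ℝ} (ht : α < t) :
    ∀ᶠ δ in nhdsWithin (0:ℝ) (Set.Ioi 0), (coverNum F δ : ℝ) ≤ δ ^ (-t) := by
  obtain ⟨x₀, hx₀⟩ := hne
  set RF : ℝ := Metric.diam F + 2 with hRF
  have hdiamF : 0 ≤ Metric.diam F := Metric.diam_nonneg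
  have hRF2 : (2:ℝ) ≤ RF := by rw [hRF]; linarith
  have hRFpos : 0 < RF := by linarith
  have hRFα : (0:ℝ) < C * RF ^ α := by positivity
  have hball : Metric.ball x₀ RF ∩ F = F := by
    apply Set.inter_eq_self_of_subset_right
    intro u hu
    have : dist u x₀ ≤ Metric.diam F :=
      Metric.dist_le_diam_of_mem (hbd.subset (Set.subset_univ F)) hu hx₀
    exact Metric.mem_ball.2 (by rw [hRF]; linarith)
  refine ((eventually_rpow_lt (show (0:ℝ) < t - α by linarith)
    (show (0:ℝ) < 1/(C * RF ^ α) by positivity)).and eventually_mem_Ioo01).mono ?_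
  rintro δ ⟨hδsmall, hδ0, hδ1⟩
  have hδRF : δ < RF := by linarith
  have hbound : (coverNum F δ : ℝ) ≤ C * (RF/δ) ^ α := by
    have := hA x₀ hx₀ δ RF hδ0 hδRF
    rwa [hball] at this
  have e1 : C * (RF/δ) ^ α = C * RF ^ α * δ ^ (-α) := by
    rw [Real.div_rpow hRFpos.le hδ0.le, Real.rpow_neg hδ0.le, div_eq_mul_inv]
    ring
  have key : C * RF ^ α * δ ^ (-α) ≤ δ ^ (-t) := by
    set B := C * RF ^ α with hB
    set p := δ ^ (t - α) with hp
    have hppos : 0 < p := Real.rpow_pos_of_pos hδ0 _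
    have hqpos : 0 < δ ^ (-α) := Real.rpow_pos_of_pos hδ0 _
    have h4 : p * B < 1 := by
      have := mul_lt_mul_of_pos_right hδsmall hRFα
      rwa [one_div, inv_mul_cancel₀ hRFα.ne'] at this
    have h3 : B ≤ 1 / p := (le_div_iff₀ hppos).2 (by linarith)
    have h6 : δ ^ (-t) = δ ^ (-α) * (1 / p) := by
      rw [hp, one_div, ← Real.rpow_neg hδ0.le, ← Real.rpow_add hδ0]
      ring_nf
    rw [h6]
    calc B * δ ^ (-α) ≤ (1/p) * δ ^ (-α) := mul_le_mul_of_nonneg_right h3 hqpos.le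
      _ = δ ^ (-α) * (1/p) := by ring
  exact hbound.trans (by rw [e1]; exact key)

end Aux5

section Aux6

open Bornology

variable {X : Type*} [MetricSpace X]

lemma coverSum_mono {Φ : ℝ → ℝ} {s ε₁ ε₂ δ : ℝ} {F : Set X} (h : ε₁ ≤ ε₂)
    (hc : CoverSum Φ s ε₁ δ F) : CoverSum Φ s ε₂ δ F := by
  obtain ⟨n, U, h1, h2, h3⟩ := hc
  exact ⟨n, U, h1, h2, h3.trans h⟩

lemma budget {δ B w t : ℝ} (hδ0 : 0 < δ) (hB : 0 < B) (hsm : δ ^ (t - w) < 1 / B) :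
    B * δ ^ (-w) ≤ δ ^ (-t) := by
  set p := δ ^ (t - w) with hp
  have hppos : 0 < p := Real.rpow_pos_of_pos hδ0 _
  have hqpos : 0 < δ ^ (-w) := Real.rpow_pos_of_pos hδ0 _
  have h4 : p * B < 1 := by
    have := mul_lt_mul_of_pos_right hsm hB
    rwa [one_div, inv_mul_cancel₀ hB.ne'] at this
  have h3 : B ≤ 1 / p := (le_div_iff₀ hppos).2 (by linarith)
  have h6 : δ ^ (-t) = δ ^ (-w) * (1 / p) := by
    rw [hp, one_div, ← Real.rpow_neg hδ0.le, ← Real.rpow_add hδ0]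
    ring_nf
  rw [h6]
  calc B * δ ^ (-w) ≤ (1/p) * δ ^ (-w) := mul_le_mul_of_nonneg_right h3 hqpos.le
    _ = δ ^ (-w) * (1/p) := by ring

lemma eventually_smallness {b c R₀ : ℝ} (hb0 : 0 < b) (hb1 : b < 1) (hc0 : 0 < c)
    (hR0pos : 0 < R₀) :
    ∀ᶠ δ in nhdsWithin (0:ℝ) (Set.Ioi 0),
      (1 + 1/c) * δ ^ ((1:ℝ)/b) ≤ δ/2 ∧ δ ^ ((1:ℝ)/b) / c < R₀ := by
  have hb1' : (1:ℝ) < 1/b := by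
    rw [lt_div_iff₀ hb0]; linarith
  have hKpos : (0:ℝ) < c/(2*(c+1)) := by positivity
  have hev1 := eventually_rpow_lt (show (0:ℝ) < 1/b - 1 by linarith) hKpos
  have hev2 := eventually_rpow_lt (show (0:ℝ) < 1/b by linarith) (by positivity : 0 < c * R₀)
  refine ((hev1.and hev2).and eventually_mem_Ioo01).mono ?_
  rintro δ ⟨⟨h1, h2⟩, hδ0, hδ1⟩
  constructor
  · have he : δ ^ ((1:ℝ)/b) = δ ^ ((1:ℝ)/b - 1) * δ := by
      rw [← Real.rpow_add_one hδ0.ne']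
      ring_nf
    rw [he]
    have hKe : (1 + 1/c) * (c/(2*(c+1))) = 1/2 := by field_simp
    have hstep : δ ^ ((1:ℝ)/b - 1) * δ ≤ (c/(2*(c+1))) * δ :=
      mul_le_mul_of_nonneg_right h1.le hδ0.le
    calc (1 + 1/c) * (δ ^ ((1:ℝ)/b - 1) * δ) ≤ (1 + 1/c) * ((c/(2*(c+1))) * δ) :=
          mul_le_mul_of_nonneg_left hstep (by positivity)
      _ = ((1 + 1/c) * (c/(2*(c+1)))) * δ := by ring
      _ = δ/2 := by rw [hKe]; ring
  · rw [div_lt_iff₀ hc0]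
    calc δ ^ ((1:ℝ)/b) < c * R₀ := h2
      _ = R₀ * c := by ring

/-- Turn a plain small-diameter cover into a `Φ`-admissible cover by fattening. -/
lemma fatten_cover {F : Set X} (hne : F.Nonempty) (hTB : TotallyBounded F)
    (hbd : IsBounded (Set.univ : Set X))
    {c : ℝ} (hc0 : 0 < c)
    (hprop : ∀ (x : X) (R : ℝ), 0 < R → ENNReal.ofReal R < EMetric.diam (Set.univ : Set X) →
      ∃ y : X, dist x y < R ∧ c * R ≤ dist x y)
    {R₀ : ℝ} (hR0 : ∀ R : ℝ, 0 < R → R < R₀ →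
      ENNReal.ofReal R < EMetric.diam (Set.univ : Set X))
    {a t' δ : ℝ} (hδ0 : 0 < δ) (ht'0 : 0 ≤ t')
    (hsmall : (1 + 1/c) * δ ^ ((1:ℝ)/a) ≤ δ/2)
    (hR0small : δ ^ ((1:ℝ)/a) / c < R₀) :
    CoverSum (fun x => x ^ ((1:ℝ)/a)) t' ((coverNum F (δ/2) : ℝ) * δ ^ t') δ F := by
  obtain ⟨x₀, hx₀⟩ := hne
  set m₀ := δ ^ ((1:ℝ)/a) with hm₀
  have m₀pos : 0 < m₀ := Real.rpow_pos_of_pos hδ0 _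
  have hcinv : 0 < 1/c := by positivity
  set R := m₀ / c with hR
  have Rpos : 0 < R := by positivity
  have hcR : c * R = m₀ := by rw [hR]; field_simp
  have hexp : (1 + 1/c) * m₀ = m₀ + m₀ / c := by ring
  have hRle2 : R ≤ δ/2 := by
    have : m₀ / c ≤ (1 + 1/c) * m₀ := by rw [hexp]; linarith [m₀pos.le]
    linarith
  have hofReal : ENNReal.ofReal R < EMetric.diam (Set.univ : Set X) := hR0 R Rpos hR0small
  obtain ⟨W, hWcov, hWdiam⟩ := coverNum_spec hTB (by linarith : (0:ℝ) < δ/2)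
  have claim : ∀ j, ∃ Vj : Set X, (W j ∩ F ⊆ Vj) ∧ m₀ ≤ Metric.diam Vj ∧ Metric.diam Vj ≤ δ := by
    intro j
    rcases (W j ∩ F).eq_empty_or_nonempty with hWj | ⟨z, hz⟩
    · obtain ⟨Vj, hV1, hV2, hV3, hV4⟩ := fatten hc0 hprop (mem_singleton x₀)
        (hbd.subset (subset_univ _)) Rpos hofReal
      refine ⟨Vj, by rw [hWj]; exact empty_subset _, by rw [← hcR]; exact hV3, ?_⟩
      have h8 : Metric.diam ({x₀} : Set X) = 0 := Metric.diam_singleton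
      rw [h8] at hV4
      linarith
    · obtain ⟨Vj, hV1, hV2, hV3, hV4⟩ := fatten hc0 hprop hz
        (hbd.subset (subset_univ _)) Rpos hofReal
      refine ⟨Vj, hV1, by rw [← hcR]; exact hV3, ?_⟩
      have hsub : Metric.diam (W j ∩ F) ≤ δ/2 :=
        le_trans (Metric.diam_mono inter_subset_left (hbd.subset (subset_univ _))) (hWdiam j)
      linarith
  choose Vf hVf1 hVf2 hVf3 using claim
  refine coverSum_of_fintype Vf ?_ (fun j => ⟨hVf2 j, hVf3 j⟩) ?_
  · intro x hx
    obtain ⟨j, hj⟩ := mem_iUnion.1 (hWcov hx)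
    exact mem_iUnion.2 ⟨j, hVf1 j ⟨hj, hx⟩⟩
  · calc ∑ j, Metric.diam (Vf j) ^ t'
        ≤ ∑ _j : Fin (coverNum F (δ/2)), δ ^ t' :=
          Finset.sum_le_sum (fun j _ => Real.rpow_le_rpow Metric.diam_nonneg (hVf3 j) ht'0)
      _ = (coverNum F (δ/2) : ℝ) * δ ^ t' := by
          rw [Finset.sum_const, Finset.card_univ, Fintype.card_fin, nsmul_eq_mul]

lemma upperBoxDim_nonneg' {F : Set X} (hne : F.Nonempty) (hTB : TotallyBounded F)
    (hBU : Filter.IsBoundedUnder (· ≤ ·) (nhdsWithin (0:ℝ) (Set.Ioi 0))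
      (fun δ : ℝ => Real.log (coverNum F δ) / -Real.log δ)) :
    0 ≤ upperBoxDim F :=
  Filter.le_limsup_of_frequently_le ((ratio_nonneg hne hTB).frequently) hBU

lemma lowerBoxDim_nonneg' {F : Set X} (hne : F.Nonempty) (hTB : TotallyBounded F)
    (hBU : Filter.IsBoundedUnder (· ≤ ·) (nhdsWithin (0:ℝ) (Set.Ioi 0))
      (fun δ : ℝ => Real.log (coverNum F δ) / -Real.log δ)) :
    0 ≤ lowerBoxDim F :=
  Filter.le_liminf_of_le hBU.isCoboundedUnder_ge (ratio_nonneg hne hTB)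

end Aux6

/-- The set defining `upperPhiDim` for `Φ δ = δ^(1/a)`. -/
def USet {X : Type*} [MetricSpace X] (F : Set X) (a : ℝ) : Set ℝ :=
  {s : ℝ | 0 ≤ s ∧ ∀ ε : ℝ, 0 < ε → ∃ δ₀ ∈ Set.Ioc (0:ℝ) 1,
    ∀ δ ∈ Set.Ioo (0:ℝ) δ₀, CoverSum (fun x => x ^ (1/a)) s ε δ F}

/-- The set defining `lowerPhiDim` for `Φ δ = δ^(1/a)`. -/
def LSet {X : Type*} [MetricSpace X] (F : Set X) (a : ℝ) : Set ℝ :=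
  {s : ℝ | 0 ≤ s ∧ ∀ ε : ℝ, 0 < ε → ∀ δ₀ ∈ Set.Ioc (0:ℝ) 1,
    ∃ δ ∈ Set.Ioo (0:ℝ) δ₀, CoverSum (fun x => x ^ (1/a)) s ε δ F}

section Aux7

variable {X : Type*} [MetricSpace X]

lemma upperPhiDim_eq (F : Set X) (a : ℝ) :
    upperPhiDim (fun δ => δ ^ (1/a)) F = sInf (USet F a) := rfl

lemma lowerPhiDim_eq (F : Set X) (a : ℝ) :
    lowerPhiDim (fun δ => δ ^ (1/a)) F = sInf (LSet F a) := rfl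

lemma coverSum_exp_mono {F : Set X} {a δ ε s₁ s₂ : ℝ} (hδ0 : 0 < δ) (hδ1 : δ ≤ 1)
    (hs : s₁ ≤ s₂)
    (h : CoverSum (fun x => x ^ (1/a)) s₁ ε δ F) : CoverSum (fun x => x ^ (1/a)) s₂ ε δ F := by
  obtain ⟨n, U, h1, h2, h3⟩ := h
  refine ⟨n, U, h1, h2, le_trans (Finset.sum_le_sum (fun i _ => ?_)) h3⟩
  have hpos : 0 < Metric.diam (U i) :=
    lt_of_lt_of_le (Real.rpow_pos_of_pos hδ0 _) (h2 i).1
  exact Real.rpow_le_rpow_of_exponent_ge hpos (le_trans (h2 i).2 hδ1) hs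

lemma USet_up_closed {F : Set X} {a s₁ s₂ : ℝ} (hs : s₁ ≤ s₂) (h : s₁ ∈ USet F a) :
    s₂ ∈ USet F a := by
  refine ⟨h.1.trans hs, fun ε hε => ?_⟩
  obtain ⟨δ₀, hδ₀, hP⟩ := h.2 ε hε
  exact ⟨δ₀, hδ₀, fun δ hδ => coverSum_exp_mono hδ.1 (le_of_lt (lt_of_lt_of_le hδ.2 hδ₀.2)) hs
    (hP δ hδ)⟩

lemma LSet_up_closed {F : Set X} {a s₁ s₂ : ℝ} (hs : s₁ ≤ s₂) (h : s₁ ∈ LSet F a) :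
    s₂ ∈ LSet F a := by
  refine ⟨h.1.trans hs, fun ε hε δ₀ hδ₀ => ?_⟩
  obtain ⟨δ, hδ, hP⟩ := h.2 ε hε δ₀ hδ₀
  exact ⟨δ, hδ, coverSum_exp_mono hδ.1 (le_of_lt (lt_of_lt_of_le hδ.2 hδ₀.2)) hs hP⟩

lemma coverSum_base_mono {F : Set X} {a b δ ε s : ℝ} (hδ0 : 0 < δ) (hδ1 : δ ≤ 1)
    (ha0 : 0 < a) (hab : a ≤ b)
    (h : CoverSum (fun x => x ^ (1/b)) s ε δ F) : CoverSum (fun x => x ^ (1/a)) s ε δ F := by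
  obtain ⟨n, U, h1, h2, h3⟩ := h
  refine ⟨n, U, h1, fun i => ⟨?_, (h2 i).2⟩, h3⟩
  have hb0 : 0 < b := lt_of_lt_of_le ha0 hab
  have : δ ^ ((1:ℝ)/a) ≤ δ ^ ((1:ℝ)/b) := by
    exact Real.rpow_le_rpow_of_exponent_ge hδ0 hδ1 (one_div_le_one_div_of_le ha0 hab)
  exact this.trans (h2 i).1

lemma USet_anti {F : Set X} {a b : ℝ} (ha0 : 0 < a) (hab : a ≤ b) :
    USet F b ⊆ USet F a := by
  rintro s ⟨hs0, hP⟩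
  refine ⟨hs0, fun ε hε => ?_⟩
  obtain ⟨δ₀, hδ₀, hQ⟩ := hP ε hε
  exact ⟨δ₀, hδ₀, fun δ hδ => coverSum_base_mono hδ.1
    (le_of_lt (lt_of_lt_of_le hδ.2 hδ₀.2)) ha0 hab (hQ δ hδ)⟩

lemma LSet_anti {F : Set X} {a b : ℝ} (ha0 : 0 < a) (hab : a ≤ b) :
    LSet F b ⊆ LSet F a := by
  rintro s ⟨hs0, hP⟩
  refine ⟨hs0, fun ε hε δ₀ hδ₀ => ?_⟩
  obtain ⟨δ, hδ, hQ⟩ := hP ε hε δ₀ hδ₀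
  exact ⟨δ, hδ, coverSum_base_mono hδ.1 (le_of_lt (lt_of_lt_of_le hδ.2 hδ₀.2)) ha0 hab hQ⟩

end Aux7

section Aux8

open Bornology

variable {X : Type*} [MetricSpace X]

lemma eventually_lt_const' {K : ℝ} (hK : 0 < K) :
    ∀ᶠ δ in nhdsWithin (0:ℝ) (Set.Ioi 0), δ < K := by
  have : Set.Ioo (0:ℝ) K ∈ nhdsWithin (0:ℝ) (Set.Ioi 0) := Ioo_mem_nhdsGT hK
  exact Filter.eventually_iff.2 (Filter.mem_of_superset this (fun x hx => hx.2))

lemma transfer_upper {F : Set X} (hTB : TotallyBounded F)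
    (hbd : IsBounded (Set.univ : Set X))
    {c : ℝ} (hc0 : 0 < c)
    (hprop : ∀ (x : X) (R : ℝ), 0 < R → ENNReal.ofReal R < EMetric.diam (Set.univ : Set X) →
      ∃ y : X, dist x y < R ∧ c * R ≤ dist x y)
    {R₀ : ℝ} (hR0pos : 0 < R₀) (hR0 : ∀ R : ℝ, 0 < R → R < R₀ →
      ENNReal.ofReal R < EMetric.diam (Set.univ : Set X))
    {α C : ℝ} (hC : 0 < C)
    (hA : ∀ x ∈ F, ∀ r R : ℝ, 0 < r → r < R →
      (coverNum (Metric.ball x R ∩ F) r : ℝ) ≤ C * (R / r) ^ α)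
    {s t a b γ : ℝ} (hs0 : 0 ≤ s) (hsα : s ≤ α) (ha0 : 0 < a) (hb0 : 0 < b) (hb1 : b < 1)
    (hγ0 : 0 < γ) (hst : s ≤ t) (h1 : γ * s / a ≤ t / b) (h2 : α ≤ t + γ * (α - s))
    (hmem : s ∈ USet F a) : t ∈ USet F b := by
  have hG : (0:ℝ) < 1 + (1 + 1/c) ^ t + C * 4 ^ α := by positivity
  refine ⟨hs0.trans hst, fun ε hε => ?_⟩
  obtain ⟨δ₀', hδ₀', hP⟩ := hmem.2 (ε / (1 + (1 + 1/c) ^ t + C * 4 ^ α)) (by positivity)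
  have hev := (eventually_smallness hb0 hb1 hc0 hR0pos).and
    ((eventually_rpow_lt hγ0 hδ₀'.1).and eventually_mem_Ioo01)
  obtain ⟨u, hu, hprops⟩ := exists_Ioo_of_eventually hev
  refine ⟨min u 1, ⟨lt_min hu one_pos, min_le_right _ _⟩, fun δ hδ => ?_⟩
  obtain ⟨⟨hsm1, hsm2⟩, hδγ, hδ0', hδ1'⟩ :=
    hprops δ hδ.1 (lt_of_lt_of_le hδ.2 (min_le_left _ _))
  have hsrc := hP (δ^γ) ⟨Real.rpow_pos_of_pos hδ.1 _, hδγ⟩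
  have hres := core_transfer hTB hbd hc0 hprop hR0 hC hA hs0 hsα ha0 hb0 hγ0 hδ.1 hδ1'.le
    hst h1 h2 hsm1 hsm2 hsrc
  have hGε : (1 + (1 + 1/c) ^ t + C * 4 ^ α) * (ε / (1 + (1 + 1/c) ^ t + C * 4 ^ α)) = ε := by
    field_simp
  rwa [hGε] at hres

lemma transfer_lower {F : Set X} (hTB : TotallyBounded F)
    (hbd : IsBounded (Set.univ : Set X))
    {c : ℝ} (hc0 : 0 < c)
    (hprop : ∀ (x : X) (R : ℝ), 0 < R → ENNReal.ofReal R < EMetric.diam (Set.univ : Set X) →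
      ∃ y : X, dist x y < R ∧ c * R ≤ dist x y)
    {R₀ : ℝ} (hR0pos : 0 < R₀) (hR0 : ∀ R : ℝ, 0 < R → R < R₀ →
      ENNReal.ofReal R < EMetric.diam (Set.univ : Set X))
    {α C : ℝ} (hC : 0 < C)
    (hA : ∀ x ∈ F, ∀ r R : ℝ, 0 < r → r < R →
      (coverNum (Metric.ball x R ∩ F) r : ℝ) ≤ C * (R / r) ^ α)
    {s t a b γ : ℝ} (hs0 : 0 ≤ s) (hsα : s ≤ α) (ha0 : 0 < a) (hb0 : 0 < b) (hb1 : b < 1)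
    (hγ0 : 0 < γ) (hγ1 : γ ≤ 1) (hst : s ≤ t) (h1 : γ * s / a ≤ t / b)
    (h2 : α ≤ t + γ * (α - s))
    (hmem : s ∈ LSet F a) : t ∈ LSet F b := by
  have hG : (0:ℝ) < 1 + (1 + 1/c) ^ t + C * 4 ^ α := by positivity
  refine ⟨hs0.trans hst, fun ε hε δ₀ hδ₀ => ?_⟩
  have hev := (eventually_smallness hb0 hb1 hc0 hR0pos).and eventually_mem_Ioo01
  obtain ⟨u, hu, hprops⟩ := exists_Ioo_of_eventually hev
  obtain ⟨η, hη, hsrc⟩ := hmem.2 (ε / (1 + (1 + 1/c) ^ t + C * 4 ^ α)) (by positivity)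
    (min δ₀ u) ⟨lt_min hδ₀.1 hu, (min_le_left _ _).trans hδ₀.2⟩
  have hηpos : 0 < η := hη.1
  have hη1 : η ≤ 1 := le_of_lt (lt_of_lt_of_le hη.2 ((min_le_left _ _).trans hδ₀.2))
  set δ := η ^ ((1:ℝ)/γ) with hδdef
  have hδpos : 0 < δ := Real.rpow_pos_of_pos hηpos _
  have hδle : δ ≤ η := by
    have h1γ : (1:ℝ) ≤ 1/γ := by
      rw [le_div_iff₀ hγ0]; linarith
    calc δ = η ^ ((1:ℝ)/γ) := rfl
      _ ≤ η ^ (1:ℝ) := Real.rpow_le_rpow_of_exponent_ge hηpos hη1 h1γ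
      _ = η := Real.rpow_one η
  have hδu : δ < u := lt_of_le_of_lt hδle (lt_of_lt_of_le hη.2 (min_le_right _ _))
  obtain ⟨⟨hsm1, hsm2⟩, hδ0', hδ1'⟩ := hprops δ hδpos hδu
  have hγδ : δ ^ γ = η := by
    rw [hδdef, ← Real.rpow_mul hηpos.le]
    have : (1:ℝ)/γ * γ = 1 := by field_simp
    rw [this, Real.rpow_one]
  have hsrc' : CoverSum (fun x => x ^ ((1:ℝ)/a)) s
      (ε / (1 + (1 + 1/c) ^ t + C * 4 ^ α)) (δ^γ) F := by rw [hγδ]; exact hsrc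
  have hres := core_transfer hTB hbd hc0 hprop hR0 hC hA hs0 hsα ha0 hb0 hγ0 hδpos hδ1'.le
    hst h1 h2 hsm1 hsm2 hsrc'
  have hGε : (1 + (1 + 1/c) ^ t + C * 4 ^ α) * (ε / (1 + (1 + 1/c) ^ t + C * 4 ^ α)) = ε := by
    field_simp
  rw [hGε] at hres
  exact ⟨δ, ⟨hδpos, lt_of_le_of_lt hδle (lt_of_lt_of_le hη.2 (min_le_left _ _))⟩, hres⟩

lemma transfer_upper_box {F : Set X} (hne : F.Nonempty) (hTB : TotallyBounded F)
    (hbd : IsBounded (Set.univ : Set X))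
    {α C : ℝ} (hC : 0 < C)
    (hA : ∀ x ∈ F, ∀ r R : ℝ, 0 < r → r < R →
      (coverNum (Metric.ball x R ∩ F) r : ℝ) ≤ C * (R / r) ^ α)
    {s t a γ : ℝ} (hs0 : 0 ≤ s) (hsα : s ≤ α) (ha0 : 0 < a)
    (hγ0 : 0 < γ) (hgap1 : γ * s / a < t) (hgap2 : α - γ * (α - s) < t)
    (hmem : s ∈ USet F a) : upperBoxDim F ≤ t := by
  set w := max (γ * s / a) (α - γ * (α - s)) with hw
  have hwt : w < t := max_lt hgap1 hgap2
  have hB : (0:ℝ) < 1 + C * 2 ^ α := by positivity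
  obtain ⟨δ₀', hδ₀', hP⟩ := hmem.2 1 one_pos
  apply upperBoxDim_le_of_eventually hne hTB
  have hev := (eventually_rpow_lt hγ0 hδ₀'.1).and
    ((eventually_rpow_lt (show (0:ℝ) < t - w by linarith) (by positivity : (0:ℝ) < 1/(1 + C * 2 ^ α))).and
      eventually_mem_Ioo01)
  refine hev.mono ?_
  rintro δ ⟨hδγ, hsm, hδ0', hδ1'⟩
  have hsrc := hP (δ^γ) ⟨Real.rpow_pos_of_pos hδ0' _, hδγ⟩
  have hN := core_box hTB hbd hC hA hs0 hsα ha0 hγ0 hδ0' hδ1'.le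
    (le_max_left _ _) (le_max_right _ _) hsrc
  rw [mul_one] at hN
  exact hN.trans (budget hδ0' hB hsm)

lemma transfer_lower_box {F : Set X} (hne : F.Nonempty) (hTB : TotallyBounded F)
    (hbd : IsBounded (Set.univ : Set X))
    {α C : ℝ} (hC : 0 < C)
    (hA : ∀ x ∈ F, ∀ r R : ℝ, 0 < r → r < R →
      (coverNum (Metric.ball x R ∩ F) r : ℝ) ≤ C * (R / r) ^ α)
    {s t a γ : ℝ} (hs0 : 0 ≤ s) (hsα : s ≤ α) (ha0 : 0 < a)
    (hγ0 : 0 < γ) (hγ1 : γ ≤ 1) (hgap1 : γ * s / a < t) (hgap2 : α - γ * (α - s) < t)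
    (hmem : s ∈ LSet F a) : lowerBoxDim F ≤ t := by
  set w := max (γ * s / a) (α - γ * (α - s)) with hw
  have hwt : w < t := max_lt hgap1 hgap2
  have hB : (0:ℝ) < 1 + C * 2 ^ α := by positivity
  apply lowerBoxDim_le_of_frequently hne hTB
  apply frequently_of_pointwise
  intro u₀ hu₀
  have hev := (eventually_rpow_lt (show (0:ℝ) < t - w by linarith)
      (by positivity : (0:ℝ) < 1/(1 + C * 2 ^ α))).and eventually_mem_Ioo01
  obtain ⟨u, hu, hprops⟩ := exists_Ioo_of_eventually hev
  obtain ⟨η, hη, hsrc⟩ := hmem.2 1 one_pos (min u₀ (min u 1))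
    ⟨lt_min hu₀ (lt_min hu one_pos), (min_le_right _ _).trans (min_le_right _ _)⟩
  have hηpos : 0 < η := hη.1
  have hη1 : η ≤ 1 :=
    le_of_lt (lt_of_lt_of_le hη.2 ((min_le_right _ _).trans (min_le_right _ _)))
  set δ := η ^ ((1:ℝ)/γ) with hδdef
  have hδpos : 0 < δ := Real.rpow_pos_of_pos hηpos _
  have hδle : δ ≤ η := by
    have h1γ : (1:ℝ) ≤ 1/γ := by rw [le_div_iff₀ hγ0]; linarith
    calc δ = η ^ ((1:ℝ)/γ) := rfl
      _ ≤ η ^ (1:ℝ) := Real.rpow_le_rpow_of_exponent_ge hηpos hη1 h1γ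
      _ = η := Real.rpow_one η
  have hδu : δ < u :=
    lt_of_le_of_lt hδle (lt_of_lt_of_le hη.2 ((min_le_right _ _).trans (min_le_left _ _)))
  obtain ⟨hsm, hδ0', hδ1'⟩ := hprops δ hδpos hδu
  have hγδ : δ ^ γ = η := by
    rw [hδdef, ← Real.rpow_mul hηpos.le]
    have : (1:ℝ)/γ * γ = 1 := by field_simp
    rw [this, Real.rpow_one]
  have hsrc' : CoverSum (fun x => x ^ ((1:ℝ)/a)) s 1 (δ^γ) F := by rw [hγδ]; exact hsrc
  have hN := core_box hTB hbd hC hA hs0 hsα ha0 hγ0 hδpos hδ1'.le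
    (le_max_left _ _) (le_max_right _ _) hsrc'
  rw [mul_one] at hN
  exact ⟨δ, hδpos, lt_of_le_of_lt hδle (lt_of_lt_of_le hη.2 (min_le_left _ _)),
    hN.trans (budget hδpos hB hsm)⟩

end Aux8

section Aux9

open Bornology

variable {X : Type*} [MetricSpace X]

lemma box_to_USet {F : Set X} (hne : F.Nonempty) (hTB : TotallyBounded F)
    (hbd : IsBounded (Set.univ : Set X))
    {c : ℝ} (hc0 : 0 < c)
    (hprop : ∀ (x : X) (R : ℝ), 0 < R → ENNReal.ofReal R < EMetric.diam (Set.univ : Set X) →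
      ∃ y : X, dist x y < R ∧ c * R ≤ dist x y)
    {R₀ : ℝ} (hR0pos : 0 < R₀) (hR0 : ∀ R : ℝ, 0 < R → R < R₀ →
      ENNReal.ofReal R < EMetric.diam (Set.univ : Set X))
    {a t t' : ℝ} (ha0 : 0 < a) (ha1 : a < 1) (ht0 : 0 ≤ t)
    (hBU : Filter.IsBoundedUnder (· ≤ ·) (nhdsWithin (0:ℝ) (Set.Ioi 0))
      (fun δ : ℝ => Real.log (coverNum F δ) / -Real.log δ))
    (hbox : upperBoxDim F < t) (htt' : t < t') : t' ∈ USet F a := by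
  refine ⟨by linarith, fun ε hε => ?_⟩
  have hevr : ∀ᶠ δ in nhdsWithin (0:ℝ) (Set.Ioi 0),
      Real.log (coverNum F δ) / -Real.log δ < t :=
    Filter.eventually_lt_of_limsup_lt hbox hBU
  have hevN : ∀ᶠ δ in nhdsWithin (0:ℝ) (Set.Ioi 0), (coverNum F δ : ℝ) ≤ δ ^ (-t) := by
    refine (hevr.and eventually_mem_Ioo01).mono ?_
    rintro δ ⟨h1, h2, h3⟩
    exact le_rpow_of_ratio_le h2 h3 (one_le_coverNum_real hne hTB h2) h1.le
  obtain ⟨u₁, hu₁, hprops₁⟩ := exists_Ioo_of_eventually hevN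
  have h2t : (0:ℝ) < (2:ℝ) ^ t := Real.rpow_pos_of_pos (by norm_num) _
  have hev2 := (eventually_smallness ha0 ha1 hc0 hR0pos).and
    ((eventually_rpow_lt (show (0:ℝ) < t' - t by linarith)
      (by positivity : (0:ℝ) < ε / (2:ℝ) ^ t)).and eventually_mem_Ioo01)
  obtain ⟨u₂, hu₂, hprops₂⟩ := exists_Ioo_of_eventually hev2
  refine ⟨min (min u₁ u₂) 1, ⟨lt_min (lt_min hu₁ hu₂) one_pos, min_le_right _ _⟩,
    fun δ hδ => ?_⟩
  have hδu₁ : δ < u₁ := lt_of_lt_of_le hδ.2 ((min_le_left _ _).trans (min_le_left _ _))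
  have hδu₂ : δ < u₂ := lt_of_lt_of_le hδ.2 ((min_le_left _ _).trans (min_le_right _ _))
  obtain ⟨⟨hsm1, hsm2⟩, hsm3, hδ0', hδ1'⟩ := hprops₂ δ hδ.1 hδu₂
  have hNhalf : (coverNum F (δ/2) : ℝ) ≤ (δ/2) ^ (-t) :=
    hprops₁ (δ/2) (by linarith) (by linarith)
  have hcov := fatten_cover hne hTB hbd hc0 hprop hR0 hδ.1
    (show (0:ℝ) ≤ t' by linarith) hsm1 hsm2
  refine coverSum_mono ?_ hcov
  have hδt' : (0:ℝ) < δ ^ t' := Real.rpow_pos_of_pos hδ.1 _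
  have e1 : (δ/2 : ℝ) ^ (-t) = 2 ^ t * δ ^ (-t) := by
    rw [Real.div_rpow hδ.1.le (by norm_num : (0:ℝ) ≤ 2), Real.rpow_neg (by norm_num : (0:ℝ) ≤ 2)]
    field_simp
    try ring
  have e2 : 2 ^ t * δ ^ (-t) * δ ^ t' = 2 ^ t * δ ^ (t' - t) := by
    rw [mul_assoc, ← Real.rpow_add hδ.1]
    ring_nf
  calc (coverNum F (δ/2) : ℝ) * δ ^ t' ≤ (δ/2) ^ (-t) * δ ^ t' :=
        mul_le_mul_of_nonneg_right hNhalf hδt'.le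
    _ = 2 ^ t * δ ^ (t' - t) := by rw [e1, e2]
    _ ≤ ε := by
        have := mul_le_mul_of_nonneg_left hsm3.le h2t.le
        calc (2:ℝ) ^ t * δ ^ (t' - t) ≤ 2 ^ t * (ε / 2 ^ t) := this
          _ = ε := by field_simp

lemma box_to_LSet {F : Set X} (hne : F.Nonempty) (hTB : TotallyBounded F)
    (hbd : IsBounded (Set.univ : Set X))
    {c : ℝ} (hc0 : 0 < c)
    (hprop : ∀ (x : X) (R : ℝ), 0 < R → ENNReal.ofReal R < EMetric.diam (Set.univ : Set X) →
      ∃ y : X, dist x y < R ∧ c * R ≤ dist x y)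
    {R₀ : ℝ} (hR0pos : 0 < R₀) (hR0 : ∀ R : ℝ, 0 < R → R < R₀ →
      ENNReal.ofReal R < EMetric.diam (Set.univ : Set X))
    {a t t' : ℝ} (ha0 : 0 < a) (ha1 : a < 1) (ht0 : 0 ≤ t)
    (hBU : Filter.IsBoundedUnder (· ≤ ·) (nhdsWithin (0:ℝ) (Set.Ioi 0))
      (fun δ : ℝ => Real.log (coverNum F δ) / -Real.log δ))
    (hbox : lowerBoxDim F < t) (htt' : t < t') : t' ∈ LSet F a := by
  refine ⟨by linarith, fun ε hε δ₀ hδ₀ => ?_⟩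
  have hfreq : ∃ᶠ δ in nhdsWithin (0:ℝ) (Set.Ioi 0),
      Real.log (coverNum F δ) / -Real.log δ < t :=
    Filter.frequently_lt_of_liminf_lt hBU.isCoboundedUnder_ge hbox
  have h2t : (0:ℝ) < (2:ℝ) ^ t := Real.rpow_pos_of_pos (by norm_num) _
  have hev2 := (eventually_smallness ha0 ha1 hc0 hR0pos).and
    ((eventually_rpow_lt (show (0:ℝ) < t' - t by linarith)
      (by positivity : (0:ℝ) < ε / (2:ℝ) ^ t)).and eventually_mem_Ioo01)
  obtain ⟨u₂, hu₂, hprops₂⟩ := exists_Ioo_of_eventually hev2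
  set K : ℝ := min δ₀ u₂ with hK
  have hKpos : 0 < K := lt_min hδ₀.1 hu₂
  have hfreq2 := hfreq.and_eventually (eventually_mem_Ioo01.and (eventually_lt_const'
    (show (0:ℝ) < K/2 by linarith)))
  obtain ⟨η, hr, ⟨hη0, hη1⟩, hηK⟩ := hfreq2.exists
  set δ := 2 * η with hδdef
  have hδ0' : 0 < δ := by linarith
  have hδK : δ < K := by rw [hδdef]; linarith
  have hδu₂ : δ < u₂ := lt_of_lt_of_le hδK (min_le_right _ _)
  obtain ⟨⟨hsm1, hsm2⟩, hsm3, hδ0'', hδ1'⟩ := hprops₂ δ hδ0' hδu₂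
  have hNη : (coverNum F η : ℝ) ≤ η ^ (-t) :=
    le_rpow_of_ratio_le hη0 hη1 (one_le_coverNum_real hne hTB hη0) hr.le
  have hηδ : δ/2 = η := by rw [hδdef]; ring
  have hcov := fatten_cover hne hTB hbd hc0 hprop hR0 hδ0'
    (show (0:ℝ) ≤ t' by linarith) hsm1 hsm2
  refine ⟨δ, ⟨hδ0', lt_of_lt_of_le hδK (min_le_left _ _)⟩, coverSum_mono ?_ hcov⟩
  have hδt' : (0:ℝ) < δ ^ t' := Real.rpow_pos_of_pos hδ0' _
  have e1 : (δ/2 : ℝ) ^ (-t) = 2 ^ t * δ ^ (-t) := by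
    rw [Real.div_rpow hδ0'.le (by norm_num : (0:ℝ) ≤ 2), Real.rpow_neg (by norm_num : (0:ℝ) ≤ 2)]
    field_simp
    try ring
  have e2 : 2 ^ t * δ ^ (-t) * δ ^ t' = 2 ^ t * δ ^ (t' - t) := by
    rw [mul_assoc, ← Real.rpow_add hδ0']
    ring_nf
  calc (coverNum F (δ/2) : ℝ) * δ ^ t' ≤ (δ/2) ^ (-t) * δ ^ t' := by
        apply mul_le_mul_of_nonneg_right _ hδt'.le
        rw [hηδ]
        exact hNη.trans (by rw [← hηδ])
    _ = 2 ^ t * δ ^ (t' - t) := by rw [e1, e2]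
    _ ≤ ε := by
        have := mul_le_mul_of_nonneg_left hsm3.le h2t.le
        calc (2:ℝ) ^ t * δ ^ (t' - t) ≤ 2 ^ t * (ε / 2 ^ t) := this
          _ = ε := by field_simp

lemma numericLemma {a b s α t : ℝ} (ha0 : 0 < a) (hab : a ≤ b) (hs : 0 ≤ s) (hsα : s < α)
    (ht : s + (b - a) * α / (4 * a) < t) :
    ∃ γ : ℝ, 0 < γ ∧ γ ≤ 1 ∧ b * (γ * s / a) < t ∧ α - γ * (α - s) < t := by
  have hα0 : 0 < α := lt_of_le_of_lt hs hsα
  have hba : 0 ≤ b - a := by linarith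
  have hdenom : 0 < a * α + s * (b - a) := by nlinarith
  refine ⟨α * a / (a * α + s * (b - a)), by positivity, ?_, ?_, ?_⟩
  · rw [div_le_one hdenom]; nlinarith
  · have e : b * ((α * a / (a * α + s * (b - a))) * s / a) = α * s * b / (a * α + s * (b - a)) := by
      field_simp
    rw [e]
    refine lt_of_le_of_lt ?_ ht
    rw [div_le_iff₀ hdenom]
    have hq : (b - a) * α / (4 * a) * (4 * a) = (b - a) * α := by field_simp
    have hq0 : 0 ≤ (b - a) * α / (4 * a) := by positivity
    set q := (b - a) * α / (4 * a) with hqdef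
    have hqe : q * (4 * a) = (b - a) * α := hq
    nlinarith [mul_nonneg hba (sq_nonneg (α - 2*s)), mul_nonneg (mul_nonneg hq0 hs) hba,
      mul_nonneg hq0 hba, sq_nonneg (α - 2*s)]
  · have e : α - (α * a / (a * α + s * (b - a))) * (α - s) = α * s * b / (a * α + s * (b - a)) := by
      field_simp
      ring
    rw [e]
    refine lt_of_le_of_lt ?_ ht
    rw [div_le_iff₀ hdenom]
    have hq : (b - a) * α / (4 * a) * (4 * a) = (b - a) * α := by field_simp
    have hq0 : 0 ≤ (b - a) * α / (4 * a) := by positivity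
    set q := (b - a) * α / (4 * a) with hqdef
    have hqe : q * (4 * a) = (b - a) * α := hq
    nlinarith [mul_nonneg hba (sq_nonneg (α - 2*s)), mul_nonneg (mul_nonneg hq0 hs) hba,
      mul_nonneg hq0 hba, sq_nonneg (α - 2*s)]

end Aux9

section Aux10

variable {X : Type*} [MetricSpace X]

/-- Choice of parameters for the Lipschitz estimate. -/
lemma step_core {F : Set X} (hAfin : ∃ α, IsAssouadBound F α)
    {θ a b t : ℝ} (hθ0 : 0 < θ) (hθa : θ ≤ a) (hab : a < b)
    (S : Set ℝ) (hSne : S.Nonempty) (hS0 : ∀ x ∈ S, 0 ≤ x)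
    (hDA : sInf S ≤ assouadDim F)
    (ht : sInf S + assouadDim F * (b - a) / (4*θ) < t) :
    ∃ s α C γ : ℝ, s ∈ S ∧ 0 ≤ s ∧ s < α ∧ 0 < C ∧
      (∀ x ∈ F, ∀ r R : ℝ, 0 < r → r < R →
        (coverNum (Metric.ball x R ∩ F) r : ℝ) ≤ C * (R/r)^α) ∧
      0 < γ ∧ γ ≤ 1 ∧ b * (γ * s / a) < t ∧ α - γ * (α - s) < t := by
  have ha0 : 0 < a := lt_of_lt_of_le hθ0 hθa
  have hba : 0 < b - a := by linarith
  set A := assouadDim F with hAdef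
  have hA0 : 0 ≤ A := assouadDim_nonneg hAfin
  set D := sInf S with hD
  have hD0 : 0 ≤ D := le_csInf hSne hS0
  set ε₁ := t - D - A * (b - a) / (4*θ) with hε₁
  have hε₁0 : 0 < ε₁ := by rw [hε₁]; linarith
  set εh := 2*θ*ε₁/(b - a) with hεh
  have hεh0 : 0 < εh := by positivity
  set ρ := min (ε₁/4) (εh/2) with hρ
  have hρ0 : 0 < ρ := lt_min (by positivity) (by positivity)
  have hρεh : ρ < εh := lt_of_le_of_lt (min_le_right _ _) (by linarith)
  have hρε₁ : ρ ≤ ε₁/4 := min_le_left _ _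
  obtain ⟨s, hsS, hslt⟩ := exists_lt_of_csInf_lt hSne (show D < D + ρ by linarith)
  have hs0 : 0 ≤ s := hS0 s hsS
  obtain ⟨hα0, C, hC, hA'⟩ := exists_assouadBound_lt hAfin
    (show A < A + εh by linarith)
  set α := A + εh with hαdef
  have hsα : s < α := by
    have : s < D + ρ := hslt
    have : D + ρ < A + εh := by linarith
    linarith
  have hkey : s + (b - a) * α / (4*a) < t := by
    have h1 : (b - a) * α / (4*a) ≤ (b - a) * α / (4*θ) := by
      apply div_le_div_of_nonneg_left (by nlinarith) (by positivity) (by linarith)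
    have h2 : (b - a) * α / (4*θ) = (b - a) * A / (4*θ) + (b - a) * εh / (4*θ) := by
      rw [hαdef]; ring
    have h3 : (b - a) * εh / (4*θ) = ε₁/2 := by
      rw [hεh]; field_simp; ring
    have h4 : (b - a) * A / (4*θ) = A * (b - a) / (4*θ) := by ring
    have hchain : s + (b - a) * α / (4*a) < (D + ρ) + ((b-a) * A/(4*θ) + ε₁/2) := by
      have := hslt
      rw [h2, h3] at h1
      linarith
    rw [h4] at hchain
    linarith
  obtain ⟨γ, hγ0, hγ1, hg1, hg2⟩ := numericLemma ha0 hab.le hs0 hsα hkey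
  exact ⟨s, α, C, γ, hsS, hs0, hsα, hC, hA', hγ0, hγ1, hg1, hg2⟩

end Aux10

set_option maxHeartbeats 2000000 in
theorem stmt7 {X : Type*} [MetricSpace X] [Nontrivial X] (hX : UniformlyPerfect X)
    (F : Set X) (hne : F.Nonempty) (hTB : TotallyBounded F)
    (hAfin : ∃ α, IsAssouadBound F α) (hApos : 0 < assouadDim F)
    (θ : ℝ) (hθ : θ ∈ Set.Ioo (0:ℝ) 1) :
    (∀ a ∈ Set.Icc θ 1, ∀ b ∈ Set.Icc θ 1,
      |upperThetaDim a F - upperThetaDim b F| ≤ assouadDim F / (4 * θ) * |a - b|) ∧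
    (∀ a ∈ Set.Icc θ 1, ∀ b ∈ Set.Icc θ 1,
      |lowerThetaDim a F - lowerThetaDim b F| ≤ assouadDim F / (4 * θ) * |a - b|) := by
  obtain ⟨hθ0, hθ1⟩ := hθ
  obtain ⟨c, hc0, hc1, hprop⟩ := hX
  obtain ⟨R₀, hR0pos, hR0⟩ := exists_R0 (X := X)
  have hbd := bounded_univ_of_assouad hAfin hApos
  have hA0 : 0 ≤ assouadDim F := assouadDim_nonneg hAfin
  obtain ⟨β, hβfull⟩ := id hAfin
  obtain ⟨hβ0, Cβ, hCβ, hAβ⟩ := hβfull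
  have hevβ := eventually_coverNum_le hne hTB hbd hCβ hβ0 hAβ (lt_add_one β)
  have hBU : Filter.IsBoundedUnder (· ≤ ·) (nhdsWithin (0:ℝ) (Set.Ioi 0))
      (fun δ : ℝ => Real.log (coverNum F δ) / -Real.log δ) :=
    ⟨β + 1, Filter.eventually_map.2 ((hevβ.and eventually_mem_Ioo01).mono
      (fun δ hδ => ratio_le_of_le hδ.2.1 hδ.2.2 (one_le_coverNum_real hne hTB hδ.2.1) hδ.1))⟩
  have hbox0 : 0 ≤ upperBoxDim F := upperBoxDim_nonneg' hne hTB hBU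
  have hlbox0 : 0 ≤ lowerBoxDim F := lowerBoxDim_nonneg' hne hTB hBU
  have hboxA : upperBoxDim F ≤ assouadDim F := by
    refine le_of_forall_gt_imp_ge_of_dense (fun t htA => ?_)
    obtain ⟨hα'0, C', hC', hA'⟩ := exists_assouadBound_lt hAfin
      (show assouadDim F < (assouadDim F + t)/2 by linarith)
    exact upperBoxDim_le_of_eventually hne hTB
      (eventually_coverNum_le hne hTB hbd hC' hα'0 hA' (by linarith))
  have hlboxA : lowerBoxDim F ≤ assouadDim F := by
    refine le_of_forall_gt_imp_ge_of_dense (fun t htA => ?_)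
    obtain ⟨hα'0, C', hC', hA'⟩ := exists_assouadBound_lt hAfin
      (show assouadDim F < (assouadDim F + t)/2 by linarith)
    exact lowerBoxDim_le_of_frequently hne hTB
      ((eventually_coverNum_le hne hTB hbd hC' hα'0 hA' (by linarith)).frequently)
  -- upper phi facts
  have hUmem : ∀ x : ℝ, 0 < x → x < 1 → ∀ t', upperBoxDim F < t' → t' ∈ USet F x := by
    intro x hx0 hx1 t' ht'
    exact box_to_USet hne hTB hbd hc0 hprop hR0pos hR0 hx0 hx1
      (t := (upperBoxDim F + t')/2) (by linarith) hBU (by linarith) (by linarith)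
  have hUne' : ∀ x : ℝ, 0 < x → x < 1 → (USet F x).Nonempty :=
    fun x hx0 hx1 => ⟨upperBoxDim F + 1, hUmem x hx0 hx1 _ (by linarith)⟩
  have hUbdd : ∀ x : ℝ, BddBelow (USet F x) := fun x => ⟨0, fun y hy => hy.1⟩
  have hUbox : ∀ x : ℝ, 0 < x → x < 1 → sInf (USet F x) ≤ upperBoxDim F := fun x hx0 hx1 =>
    le_of_forall_gt_imp_ge_of_dense (fun t' ht' => csInf_le (hUbdd x) (hUmem x hx0 hx1 t' ht'))
  -- lower phi facts
  have hLmem : ∀ x : ℝ, 0 < x → x < 1 → ∀ t', lowerBoxDim F < t' → t' ∈ LSet F x := by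
    intro x hx0 hx1 t' ht'
    exact box_to_LSet hne hTB hbd hc0 hprop hR0pos hR0 hx0 hx1
      (t := (lowerBoxDim F + t')/2) (by linarith) hBU (by linarith) (by linarith)
  have hLne' : ∀ x : ℝ, 0 < x → x < 1 → (LSet F x).Nonempty :=
    fun x hx0 hx1 => ⟨lowerBoxDim F + 1, hLmem x hx0 hx1 _ (by linarith)⟩
  have hLbdd : ∀ x : ℝ, BddBelow (LSet F x) := fun x => ⟨0, fun y hy => hy.1⟩
  have hLbox : ∀ x : ℝ, 0 < x → x < 1 → sInf (LSet F x) ≤ lowerBoxDim F := fun x hx0 hx1 =>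
    le_of_forall_gt_imp_ge_of_dense (fun t' ht' => csInf_le (hLbdd x) (hLmem x hx0 hx1 t' ht'))
  -- value unfolding
  have hval_u : ∀ x : ℝ, 0 < x → x < 1 → upperThetaDim x F = sInf (USet F x) := by
    intro x hx0 hx1
    unfold upperThetaDim
    rw [if_neg (ne_of_gt hx0), if_neg (ne_of_lt hx1)]
    rfl
  have hval_u1 : upperThetaDim 1 F = upperBoxDim F := by
    unfold upperThetaDim
    rw [if_neg one_ne_zero, if_pos rfl]
  have hval_l : ∀ x : ℝ, 0 < x → x < 1 → lowerThetaDim x F = sInf (LSet F x) := by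
    intro x hx0 hx1
    unfold lowerThetaDim
    rw [if_neg (ne_of_gt hx0), if_neg (ne_of_lt hx1)]
    rfl
  have hval_l1 : lowerThetaDim 1 F = lowerBoxDim F := by
    unfold lowerThetaDim
    rw [if_neg one_ne_zero, if_pos rfl]
  -- main monotone + Lipschitz claims
  have main_up : ∀ a b : ℝ, θ ≤ a → a ≤ b → b ≤ 1 →
      upperThetaDim a F ≤ upperThetaDim b F ∧
      upperThetaDim b F ≤ upperThetaDim a F + assouadDim F/(4*θ)*(b-a) := by
    intro a b hθa hab hb1
    have ha0 : 0 < a := lt_of_lt_of_le hθ0 hθa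
    have hb0 : 0 < b := lt_of_lt_of_le ha0 hab
    rcases eq_or_lt_of_le hab with rfl | hab'
    · refine ⟨le_refl _, ?_⟩
      have hz : assouadDim F/(4*θ)*(a-a) = 0 := by ring
      rw [hz]
      linarith
    rcases eq_or_lt_of_le hb1 with rfl | hb1'
    · have ha1 : a < 1 := hab'
      rw [hval_u a ha0 ha1, hval_u1]
      refine ⟨hUbox a ha0 ha1, ?_⟩
      refine le_of_forall_gt_imp_ge_of_dense (fun t ht => ?_)
      have he : assouadDim F/(4*θ)*(1-a) = assouadDim F*(1-a)/(4*θ) := by ring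
      have ht' : sInf (USet F a) + assouadDim F * (1 - a)/(4*θ) < t := by linarith
      obtain ⟨s, α', C', γ, hsS, hs0, hsα, hC', hA', hγ0, hγ1, hg1, hg2⟩ :=
        step_core hAfin hθ0 hθa hab' (USet F a) (hUne' a ha0 ha1)
          (fun y hy => hy.1) ((hUbox a ha0 ha1).trans hboxA) ht'
      exact transfer_upper_box hne hTB hbd hC' hA' hs0 hsα.le ha0 hγ0
        (by linarith) hg2 hsS
    · have ha1 : a < 1 := lt_trans hab' hb1'
      rw [hval_u a ha0 ha1, hval_u b hb0 hb1']
      refine ⟨csInf_le_csInf (hUbdd a) (hUne' b hb0 hb1') (USet_anti ha0 hab), ?_⟩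
      refine le_of_forall_gt_imp_ge_of_dense (fun t ht => ?_)
      have he : assouadDim F/(4*θ)*(b-a) = assouadDim F*(b-a)/(4*θ) := by ring
      have ht' : sInf (USet F a) + assouadDim F * (b - a)/(4*θ) < t := by linarith
      obtain ⟨s, α', C', γ, hsS, hs0, hsα, hC', hA', hγ0, hγ1, hg1, hg2⟩ :=
        step_core hAfin hθ0 hθa hab' (USet F a) (hUne' a ha0 ha1)
          (fun y hy => hy.1) ((hUbox a ha0 ha1).trans hboxA) ht'
      have hst : s ≤ t := by
        nlinarith [mul_nonneg (sub_nonneg.2 hγ1) (sub_nonneg.2 hsα.le)]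
      have h1 : γ * s / a ≤ t / b := by
        rw [le_div_iff₀ hb0]
        nlinarith [hg1]
      exact csInf_le (hUbdd b)
        (transfer_upper hTB hbd hc0 hprop hR0pos hR0 hC' hA' hs0 hsα.le ha0 hb0 hb1'
          hγ0 hst h1 (by linarith) hsS)
  have main_low : ∀ a b : ℝ, θ ≤ a → a ≤ b → b ≤ 1 →
      lowerThetaDim a F ≤ lowerThetaDim b F ∧
      lowerThetaDim b F ≤ lowerThetaDim a F + assouadDim F/(4*θ)*(b-a) := by
    intro a b hθa hab hb1
    have ha0 : 0 < a := lt_of_lt_of_le hθ0 hθa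
    have hb0 : 0 < b := lt_of_lt_of_le ha0 hab
    rcases eq_or_lt_of_le hab with rfl | hab'
    · refine ⟨le_refl _, ?_⟩
      have hz : assouadDim F/(4*θ)*(a-a) = 0 := by ring
      rw [hz]
      linarith
    rcases eq_or_lt_of_le hb1 with rfl | hb1'
    · have ha1 : a < 1 := hab'
      rw [hval_l a ha0 ha1, hval_l1]
      refine ⟨hLbox a ha0 ha1, ?_⟩
      refine le_of_forall_gt_imp_ge_of_dense (fun t ht => ?_)
      have he : assouadDim F/(4*θ)*(1-a) = assouadDim F*(1-a)/(4*θ) := by ring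
      have ht' : sInf (LSet F a) + assouadDim F * (1 - a)/(4*θ) < t := by linarith
      obtain ⟨s, α', C', γ, hsS, hs0, hsα, hC', hA', hγ0, hγ1, hg1, hg2⟩ :=
        step_core hAfin hθ0 hθa hab' (LSet F a) (hLne' a ha0 ha1)
          (fun y hy => hy.1) ((hLbox a ha0 ha1).trans hlboxA) ht'
      exact transfer_lower_box hne hTB hbd hC' hA' hs0 hsα.le ha0 hγ0 hγ1
        (by linarith) hg2 hsS
    · have ha1 : a < 1 := lt_trans hab' hb1'
      rw [hval_l a ha0 ha1, hval_l b hb0 hb1']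
      refine ⟨csInf_le_csInf (hLbdd a) (hLne' b hb0 hb1') (LSet_anti ha0 hab), ?_⟩
      refine le_of_forall_gt_imp_ge_of_dense (fun t ht => ?_)
      have he : assouadDim F/(4*θ)*(b-a) = assouadDim F*(b-a)/(4*θ) := by ring
      have ht' : sInf (LSet F a) + assouadDim F * (b - a)/(4*θ) < t := by linarith
      obtain ⟨s, α', C', γ, hsS, hs0, hsα, hC', hA', hγ0, hγ1, hg1, hg2⟩ :=
        step_core hAfin hθ0 hθa hab' (LSet F a) (hLne' a ha0 ha1)
          (fun y hy => hy.1) ((hLbox a ha0 ha1).trans hlboxA) ht'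
      have hst : s ≤ t := by
        nlinarith [mul_nonneg (sub_nonneg.2 hγ1) (sub_nonneg.2 hsα.le)]
      have h1 : γ * s / a ≤ t / b := by
        rw [le_div_iff₀ hb0]
        nlinarith [hg1]
      exact csInf_le (hLbdd b)
        (transfer_lower hTB hbd hc0 hprop hR0pos hR0 hC' hA' hs0 hsα.le ha0 hb0 hb1'
          hγ0 hγ1 hst h1 (by linarith) hsS)
  have hK0 : 0 ≤ assouadDim F / (4*θ) := by positivity
  constructor
  · intro a ha b hb
    rcases le_total a b with h | h
    · obtain ⟨m1, m2⟩ := main_up a b ha.1 h hb.2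
      have habs : |a - b| = b - a := by
        rw [abs_sub_comm]; exact abs_of_nonneg (by linarith)
      rw [habs, abs_le]
      constructor
      · linarith
      · nlinarith [mul_nonneg hK0 (show (0:ℝ) ≤ b - a by linarith)]
    · obtain ⟨m1, m2⟩ := main_up b a hb.1 h ha.2
      have habs : |a - b| = a - b := abs_of_nonneg (by linarith)
      rw [habs, abs_le]
      constructor
      · nlinarith [mul_nonneg hK0 (show (0:ℝ) ≤ a - b by linarith)]
      · linarith
  · intro a ha b hb
    rcases le_total a b with h | h
    · obtain ⟨m1, m2⟩ := main_low a b ha.1 h hb.2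
      have habs : |a - b| = b - a := by
        rw [abs_sub_comm]; exact abs_of_nonneg (by linarith)
      rw [habs, abs_le]
      constructor
      · linarith
      · nlinarith [mul_nonneg hK0 (show (0:ℝ) ≤ b - a by linarith)]
    · obtain ⟨m1, m2⟩ := main_low b a hb.1 h ha.2
      have habs : |a - b| = a - b := abs_of_nonneg (by linarith)
      rw [habs, abs_le]
      constructor
      · nlinarith [mul_nonneg hK0 (show (0:ℝ) ≤ a - b by linarith)]
      · linarith
end
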